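/- arXiv:1806.01204 — 4 statements merged into one kernel-verified Lean document; each statement's English description precedes it below -/
import Mathlib

section
/- Let n ≥ 1 and let 0 = V_0 ≤ V_1 ≤ … ≤ V_n be real numbers with V_n > 0. For t ∈ [0,1] let k(t) ∈ {0, 1, …, n} satisfy V_{k(t)} ≤ t V_n, and additionally t V_n < V_{k(t)+1} whenever k(t) < n. Then for all t ∈ [0,1], |k(t) − ⌊nt⌋| ≤ 2 n max_{0≤j≤n} |V_j − j/n| + 2. -/
open MeasureTheory ProbabilityTheory Filter Topology

noncomputable section

/-- **Deterministic estimate underlying Proposition 4.5.**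
Let `0 = V 0 ≤ V 1 ≤ … ≤ V n` with `V n > 0`.  For `t ∈ [0,1]` let `k t ∈ {0,…,n}`
satisfy `V (k t) ≤ t * V n`, and `t * V n < V (k t + 1)` whenever `k t < n`.  Then
`|k t − ⌊n t⌋| ≤ 2 n max_{0 ≤ j ≤ n} |V j − j/n| + 2` for all `t ∈ [0,1]`. -/
theorem index_comparison_estimate
    (n : ℕ) (hn : 1 ≤ n) (V : ℕ → ℝ)
    (hV0 : V 0 = 0)
    (hmono : ∀ i j : ℕ, i ≤ j → j ≤ n → V i ≤ V j)
    (hpos : 0 < V n)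
    (k : ℝ → ℕ)
    (hkn : ∀ t ∈ Set.Icc (0:ℝ) 1, k t ≤ n)
    (hk1 : ∀ t ∈ Set.Icc (0:ℝ) 1, V (k t) ≤ t * V n)
    (hk2 : ∀ t ∈ Set.Icc (0:ℝ) 1, k t < n → t * V n < V (k t + 1)) :
    ∀ t ∈ Set.Icc (0:ℝ) 1,
      |(k t : ℝ) - (⌊(n:ℝ) * t⌋₊ : ℝ)| ≤
        2 * n * ((Finset.range (n+1)).sup' Finset.nonempty_range_add_one
          (fun j => |V j - (j:ℝ)/(n:ℝ)|)) + 2 := by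
  intro t ht
  obtain ⟨ht0, ht1⟩ := ht
  set M := (Finset.range (n+1)).sup' Finset.nonempty_range_add_one
      (fun j => |V j - (j:ℝ)/(n:ℝ)|) with hMdef
  have hN : (0:ℝ) < n := by exact_mod_cast hn
  have hMle : ∀ j, j ≤ n → |V j - (j:ℝ)/(n:ℝ)| ≤ M := by
    intro j hj
    exact Finset.le_sup' (fun j => |V j - (j:ℝ)/(n:ℝ)|)
      (Finset.mem_range.mpr (Nat.lt_succ_of_le hj))
  have hkt : k t ≤ n := hkn t ⟨ht0, ht1⟩
  have h1 : V (k t) ≤ t * V n := hk1 t ⟨ht0, ht1⟩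
  have hM0 : 0 ≤ M := le_trans (abs_nonneg _) (hMle 0 (Nat.zero_le n))
  have hak := abs_le.mp (hMle (k t) hkt)
  have han := abs_le.mp (hMle n le_rfl)
  have hnn : ((n:ℝ))/(n:ℝ) = 1 := div_self (ne_of_gt hN)
  rw [hnn] at han
  have hfloorgt : (n:ℝ) * t < (⌊(n:ℝ)*t⌋₊ : ℝ) + 1 := Nat.lt_floor_add_one _
  have hfloorle : (⌊(n:ℝ)*t⌋₊:ℝ) ≤ (n:ℝ)*t := Nat.floor_le (by positivity)
  -- upper bound : k t ≤ n t + 2 n M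
  have hup : (k t : ℝ) ≤ (n:ℝ)*t + 2*(n:ℝ)*M := by
    have h2 : (k t : ℝ)/(n:ℝ) - M ≤ t * V n := le_trans (by linarith [hak.1]) h1
    have h3 : t * V n ≤ t + M := by nlinarith [han.2]
    have h4 : (k t : ℝ)/(n:ℝ) ≤ t + 2*M := by linarith
    have h5 : (k t : ℝ) ≤ (t + 2*M) * n := (div_le_iff₀ hN).mp h4
    nlinarith
  -- lower bound : floor(n t) ≤ k t + 1 + 2 n M
  have hlow : (⌊(n:ℝ)*t⌋₊:ℝ) ≤ (k t : ℝ) + 1 + 2*(n:ℝ)*M := by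
    by_cases hc : k t < n
    · have h2 : t * V n < V (k t + 1) := hk2 t ⟨ht0, ht1⟩ hc
      have hak1 := abs_le.mp (hMle (k t + 1) hc)
      have h3 : t - M ≤ t * V n := by nlinarith [han.1]
      have h4 : V (k t + 1) ≤ ((k t : ℝ) + 1)/(n:ℝ) + M := by
        push_cast at hak1 ⊢
        linarith [hak1.2]
      have h5 : t - M < ((k t : ℝ) + 1)/(n:ℝ) + M := by linarith
      have h6 : (t - 2*M) * n ≤ (k t : ℝ) + 1 := by
        have h5' : t - 2*M ≤ ((k t : ℝ) + 1)/(n:ℝ) := by linarith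
        exact (le_div_iff₀ hN).mp h5'
      nlinarith
    · have hke : k t = n := le_antisymm hkt (not_lt.mp hc)
      have : (⌊(n:ℝ)*t⌋₊:ℝ) ≤ (n:ℝ) := le_trans hfloorle (by nlinarith)
      rw [hke]
      nlinarith
  rw [abs_le]
  constructor <;> linarith
end
end

section
/- Let (Λ, μ) be a probability space, T : Λ → Λ a measure-preserving transformation, v : Λ → ℝ measurable, and q ≥ 1. Define v_ℓ = Σ_{j=0}^{ℓ−1} v∘T^j and Z_n = max_{0 ≤ i, ℓ ≤ n^{1/2}} |v_ℓ| ∘ T^{i⌊n^{1/2}⌋}. Suppose there is K > 0 such that ‖max_{ℓ≤n} |v_ℓ|‖_{L^q(μ)} ≤ K n^{1/2} for all n ≥ 1. Then there is a constant C > 0 depending only on q such that ‖Z_n‖_{L^q(μ)} ≤ C K n^{1/4 + 1/(2q)} for all n ≥ 1. -/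
open MeasureTheory ProbabilityTheory Filter Topology

noncomputable section

/-- Birkhoff sums `v_ℓ = ∑_{j<ℓ} v ∘ T^j`. -/
def birkhoff {Λ : Type*} (T : Λ → Λ) (v : Λ → ℝ) (n : ℕ) (x : Λ) : ℝ :=
  ∑ j ∈ Finset.range n, v (T^[j] x)

open scoped ENNReal NNReal

lemma measurable_birkhoff {Λ : Type*} [MeasurableSpace Λ] {T : Λ → Λ} (hT : Measurable T)
    {v : Λ → ℝ} (hv : Measurable v) (ℓ : ℕ) : Measurable (birkhoff T v ℓ) := by
  unfold birkhoff
  exact Finset.measurable_sum _ (fun j _ => hv.comp (hT.iterate j))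

/-- `Z_n = max_{0 ≤ i,ℓ ≤ √n} |v_ℓ| ∘ T^{i⌊√n⌋}` (pointwise). -/
def Zmax {Λ : Type*} (T : Λ → Λ) (v : Λ → ℝ) (n : ℕ) (x : Λ) : ℝ :=
  ((Finset.range (⌊Real.sqrt n⌋₊ + 1)) ×ˢ (Finset.range (⌊Real.sqrt n⌋₊ + 1))).sup'
    (Finset.nonempty_range_add_one.product Finset.nonempty_range_add_one)
    (fun q => |birkhoff T v q.2 (T^[q.1 * ⌊Real.sqrt n⌋₊] x)|)

/-- **Proposition 4.8(b).**  If `‖max_{ℓ≤n} |v_ℓ|‖_{L^q(μ)} ≤ K n^{1/2}` for all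
`n ≥ 1` (for a measure-preserving `T` on a probability space and `q ≥ 1`), then
`‖Z_n‖_{L^q(μ)} ≤ C K n^{1/4 + 1/(2q)}` for all `n ≥ 1`, where `C > 0` depends
only on `q`. -/
theorem Zmax_Lq_estimate (q : ℝ) (hq : 1 ≤ q) :
    ∃ C : ℝ, 0 < C ∧
      ∀ (Λ : Type) (mΛ : MeasurableSpace Λ) (μ : Measure Λ)
        (_ : IsProbabilityMeasure μ) (T : Λ → Λ) (_ : MeasurePreserving T μ μ)
        (v : Λ → ℝ) (_ : Measurable v) (K : ℝ) (_ : 0 < K),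
        (∀ n : ℕ, 1 ≤ n →
          eLpNorm (fun x => (Finset.range (n+1)).sup' Finset.nonempty_range_add_one
              (fun ℓ => |birkhoff T v ℓ x|)) (ENNReal.ofReal q) μ
            ≤ ENNReal.ofReal (K * (n:ℝ) ^ ((1:ℝ)/2))) →
        ∀ n : ℕ, 1 ≤ n →
          eLpNorm (Zmax T v n) (ENNReal.ofReal q) μ
            ≤ ENNReal.ofReal (C * K * (n:ℝ) ^ ((1:ℝ)/4 + 1/(2*q))) := by
  have hq0 : (0:ℝ) < q := lt_of_lt_of_le one_pos hq
  refine ⟨2, two_pos, ?_⟩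
  intro Λ mΛ μ hμ T hT v hv K hK hyp n hn
  set m := ⌊Real.sqrt n⌋₊ with hm
  have hn1 : (1:ℝ) ≤ (n:ℝ) := by exact_mod_cast hn
  have hsq1 : (1:ℝ) ≤ Real.sqrt n := by
    rw [show (1:ℝ) = Real.sqrt 1 by simp]
    exact Real.sqrt_le_sqrt hn1
  have hm1 : 1 ≤ m := Nat.le_floor (by exact_mod_cast hsq1)
  have hmle : (m:ℝ) ≤ Real.sqrt n := Nat.floor_le (Real.sqrt_nonneg _)
  set g : Λ → ℝ := fun x => (Finset.range (m+1)).sup' Finset.nonempty_range_add_one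
      (fun ℓ => |birkhoff T v ℓ x|) with hg
  have hgmeas : Measurable g := by
    have h := Finset.measurable_sup' (Finset.nonempty_range_add_one (n := m))
      (f := fun ℓ x => |birkhoff T v ℓ x|)
      (fun ℓ _ => (measurable_birkhoff hT.measurable hv ℓ).abs)
    have he : g = (Finset.range (m+1)).sup' Finset.nonempty_range_add_one
        (fun ℓ x => |birkhoff T v ℓ x|) := by
      funext x; rw [hg]; simp [Finset.sup'_apply]
    rw [he]; exact h
  -- pointwise bound
  have hpt : ∀ x, (‖Zmax T v n x‖₊ : ℝ≥0∞) ^ q ≤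
      ∑ i ∈ Finset.range (m+1), (‖g (T^[i*m] x)‖₊ : ℝ≥0∞) ^ q := by
    intro x
    obtain ⟨⟨i₀, ℓ₀⟩, hmem, hZeq⟩ := Finset.exists_mem_eq_sup'
      (s := (Finset.range (m+1)) ×ˢ (Finset.range (m+1)))
      (Finset.nonempty_range_add_one.product Finset.nonempty_range_add_one)
      (fun p : ℕ × ℕ => |birkhoff T v p.2 (T^[p.1 * m] x)|)
    rw [Finset.mem_product] at hmem
    have hle : Zmax T v n x ≤ g (T^[i₀*m] x) :=
      le_of_eq_of_le hZeq (Finset.le_sup' (fun ℓ => |birkhoff T v ℓ (T^[i₀*m] x)|) hmem.2)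
    have h0 : 0 ≤ Zmax T v n x := by
      have h00 : ((0,0) : ℕ × ℕ) ∈ (Finset.range (m+1)) ×ˢ (Finset.range (m+1)) := by
        simp
      have h01 := Finset.le_sup' (fun p : ℕ × ℕ => |birkhoff T v p.2 (T^[p.1 * m] x)|) h00
      exact le_of_eq_of_le (by simp [birkhoff]) h01
    have hg0 : 0 ≤ g (T^[i₀*m] x) := le_trans h0 hle
    have hnn : ‖Zmax T v n x‖₊ ≤ ‖g (T^[i₀*m] x)‖₊ := by
      rw [← NNReal.coe_le_coe, coe_nnnorm, coe_nnnorm, Real.norm_eq_abs, Real.norm_eq_abs]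
      exact abs_le_abs hle (by linarith)
    calc (‖Zmax T v n x‖₊ : ℝ≥0∞) ^ q ≤ (‖g (T^[i₀*m] x)‖₊ : ℝ≥0∞) ^ q := by
          gcongr <;> exact_mod_cast hnn
      _ ≤ _ := Finset.single_le_sum (f := fun i => (‖g (T^[i*m] x)‖₊ : ℝ≥0∞) ^ q)
          (fun i _ => zero_le) hmem.1
  -- integral bound
  set I : ℝ≥0∞ := ∫⁻ x, (‖g x‖₊ : ℝ≥0∞) ^ q ∂μ with hI
  have hgq : ∀ i : ℕ, ∫⁻ x, (‖g (T^[i*m] x)‖₊ : ℝ≥0∞) ^ q ∂μ = I := by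
    intro i
    exact (hT.iterate (i*m)).lintegral_comp ((hgmeas.nnnorm.coe_nnreal_ennreal).pow_const q)
  have hint : ∫⁻ x, (‖Zmax T v n x‖₊ : ℝ≥0∞) ^ q ∂μ ≤ (m+1 : ℕ) * I := by
    calc ∫⁻ x, (‖Zmax T v n x‖₊ : ℝ≥0∞) ^ q ∂μ
        ≤ ∫⁻ x, ∑ i ∈ Finset.range (m+1), (‖g (T^[i*m] x)‖₊ : ℝ≥0∞) ^ q ∂μ :=
          lintegral_mono hpt
      _ = ∑ i ∈ Finset.range (m+1), ∫⁻ x, (‖g (T^[i*m] x)‖₊ : ℝ≥0∞) ^ q ∂μ :=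
          lintegral_finset_sum _ (fun i _ =>
            ((hgmeas.comp (hT.measurable.iterate (i*m))).nnnorm.coe_nnreal_ennreal).pow_const q)
      _ = ∑ i ∈ Finset.range (m+1), I := Finset.sum_congr rfl (fun i _ => hgq i)
      _ = (m+1 : ℕ) * I := by rw [Finset.sum_const, Finset.card_range, nsmul_eq_mul]
  -- relate eLpNorm to lintegral
  have hp0 : ENNReal.ofReal q ≠ 0 := by simp [ENNReal.ofReal_eq_zero]; linarith
  have hptop : ENNReal.ofReal q ≠ ⊤ := ENNReal.ofReal_ne_top
  have htoReal : (ENNReal.ofReal q).toReal = q := ENNReal.toReal_ofReal hq0.le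
  have hZ : eLpNorm (Zmax T v n) (ENNReal.ofReal q) μ
      = (∫⁻ x, (‖Zmax T v n x‖₊ : ℝ≥0∞) ^ q ∂μ) ^ (1/q) := by
    rw [eLpNorm_eq_lintegral_rpow_enorm_toReal hp0 hptop, htoReal]
    rfl
  have hgNorm : I ^ (1/q) ≤ ENNReal.ofReal (K * (m:ℝ) ^ ((1:ℝ)/2)) := by
    have := hyp m hm1
    rwa [eLpNorm_eq_lintegral_rpow_enorm_toReal hp0 hptop, htoReal] at this
  have key : eLpNorm (Zmax T v n) (ENNReal.ofReal q) μ
      ≤ ((m+1 : ℕ) : ℝ≥0∞) ^ (1/q) * ENNReal.ofReal (K * (m:ℝ) ^ ((1:ℝ)/2)) := by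
    rw [hZ]
    calc (∫⁻ x, (‖Zmax T v n x‖₊ : ℝ≥0∞) ^ q ∂μ) ^ (1/q)
        ≤ ((m+1 : ℕ) * I) ^ (1/q) := by
          gcongr <;> exact hint
      _ = ((m+1 : ℕ) : ℝ≥0∞) ^ (1/q) * I ^ (1/q) :=
          ENNReal.mul_rpow_of_nonneg _ _ (by positivity)
      _ ≤ _ := by gcongr
  refine key.trans ?_
  -- now real arithmetic
  have hcast : (((m+1 : ℕ)) : ℝ≥0∞) = ENNReal.ofReal ((m:ℝ)+1) := by
    rw [← ENNReal.ofReal_natCast (m+1)]; norm_num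
  rw [hcast, ENNReal.ofReal_rpow_of_nonneg (by positivity) (by positivity),
    ← ENNReal.ofReal_mul (by positivity)]
  apply ENNReal.ofReal_le_ofReal
  -- ((m+1)^(1/q)) * (K * m^(1/2)) ≤ 2*K*n^(1/4+1/(2q))
  have hn0 : (0:ℝ) < n := by linarith
  have hsqrt : Real.sqrt n = (n:ℝ) ^ ((1:ℝ)/2) := Real.sqrt_eq_rpow _
  have h1 : ((m:ℝ)+1) ^ ((1:ℝ)/q) ≤ 2 * (n:ℝ) ^ (1/(2*q)) := by
    have hm1' : (1:ℝ) ≤ (m:ℝ) := by exact_mod_cast hm1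
    have h2m : (m:ℝ)+1 ≤ 2 * (n:ℝ) ^ ((1:ℝ)/2) := by
      rw [← hsqrt]; linarith
    calc ((m:ℝ)+1) ^ ((1:ℝ)/q) ≤ (2 * (n:ℝ) ^ ((1:ℝ)/2)) ^ ((1:ℝ)/q) := by
          gcongr
      _ = 2 ^ ((1:ℝ)/q) * ((n:ℝ) ^ ((1:ℝ)/2)) ^ ((1:ℝ)/q) :=
          Real.mul_rpow (by norm_num) (by positivity)
      _ ≤ 2 * (n:ℝ) ^ (1/(2*q)) := by
          have e1 : ((n:ℝ) ^ ((1:ℝ)/2)) ^ ((1:ℝ)/q) = (n:ℝ) ^ (1/(2*q)) := by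
            rw [← Real.rpow_mul hn0.le]
            congr 1; field_simp
          rw [e1]
          have h2q : (2:ℝ) ^ ((1:ℝ)/q) ≤ 2 := by
            calc (2:ℝ) ^ ((1:ℝ)/q) ≤ 2 ^ (1:ℝ) :=
                Real.rpow_le_rpow_of_exponent_le one_le_two (by
                  rw [div_le_one hq0]; exact hq)
              _ = 2 := Real.rpow_one 2
          exact mul_le_mul_of_nonneg_right h2q (by positivity)
  have h2 : (m:ℝ) ^ ((1:ℝ)/2) ≤ (n:ℝ) ^ ((1:ℝ)/4) := by
    calc (m:ℝ) ^ ((1:ℝ)/2) ≤ (Real.sqrt n) ^ ((1:ℝ)/2) := by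
          gcongr
      _ = (n:ℝ) ^ ((1:ℝ)/4) := by
          rw [hsqrt, ← Real.rpow_mul hn0.le]; norm_num
  calc ((m:ℝ)+1) ^ ((1:ℝ)/q) * (K * (m:ℝ) ^ ((1:ℝ)/2))
      ≤ (2 * (n:ℝ) ^ (1/(2*q))) * (K * (n:ℝ) ^ ((1:ℝ)/4)) := by
        apply mul_le_mul h1 (by gcongr) (by positivity) (by positivity)
    _ = 2 * K * (n:ℝ) ^ ((1:ℝ)/4 + 1/(2*q)) := by
        rw [Real.rpow_add hn0]; ring
end
end

section
/- Let T : Λ → Λ be an ergodic measure-preserving transformation of a probability space (Λ, μ), v ∈ L^∞(Λ), and suppose b ≡ 1. Assume a_ε satisfies the regularity conditions and the moment condition (5.2) holds with exponent q ≥ 1. Then there is a constant C > 0 such that for all ε ∈ (0,1), x̂_ε(t) = ξ + ∫₀^t ā(x̂_ε(s)) ds + W_ε(t) + D_ε(t) + E_ε(t) for all t ∈ [0,1], where the remainder E_ε defined by this identity satisfies ‖sup_{t∈[0,1]} |E_ε(t)|‖_{L^q(μ)} ≤ C ε^{1/3}. -/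
open MeasureTheory ProbabilityTheory Filter Topology

noncomputable section

/-- The space `C[0,1]` of continuous functions on `[0,1]` with the sup norm. -/
abbrev C01 := C(Set.Icc (0:ℝ) 1, ℝ)

/-- The Prokhorov distance between (the laws of) two random elements of `C[0,1]`,
defined on possibly different probability spaces:
`π₁(X,Y) = inf{ε > 0 : P(X ∈ A) ≤ Q(Y ∈ Aᵉ) + ε for all closed A}`. -/
def prokhorov {Ω₁ Ω₂ : Type*} [MeasurableSpace Ω₁] [MeasurableSpace Ω₂]
    (P : Measure Ω₁) (Q : Measure Ω₂) (X : Ω₁ → C01) (Y : Ω₂ → C01) : ℝ :=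
  sInf {ε : ℝ | 0 < ε ∧ ∀ A : Set C01, IsClosed A →
    P (X ⁻¹' A) ≤ Q (Y ⁻¹' Metric.thickening ε A) + ENNReal.ofReal ε}

/-- Evaluation of `u ∈ C[0,1]` at an arbitrary real time (clamped to `[0,1]`). -/
def ev (u : C01) (s : ℝ) : ℝ := u (Set.projIcc (0:ℝ) 1 (by norm_num) s)

/-- The slow variables of the fast-slow system
`x_ε(n+1) = x_ε(n) + ε² a_ε(x_ε(n), y(n)) + ε b(x_ε(n)) v(y(n))`, `x_ε(0) = ξ`,
where `y(n) = Tⁿ y`. -/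
def slow {Λ : Type*} (a : ℝ → ℝ → Λ → ℝ) (b : ℝ → ℝ) (v : Λ → ℝ) (T : Λ → Λ)
    (ξ ε : ℝ) (y : Λ) : ℕ → ℝ
  | 0 => ξ
  | n+1 => slow a b v T ξ ε y n + ε^2 * a ε (slow a b v T ξ ε y n) (T^[n] y)
      + ε * b (slow a b v T ξ ε y n) * v (T^[n] y)

/-- `ā(x) = ∫ a₀(x,y) dμ(y)`. -/
def abar {Λ : Type*} [MeasurableSpace Λ] (μ : Measure Λ) (a : ℝ → ℝ → Λ → ℝ) (x : ℝ) : ℝ :=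
  ∫ y, a 0 x y ∂μ

/-- `ã(x,y) = a₀(x,y) − ā(x)`. -/
def atil {Λ : Type*} [MeasurableSpace Λ] (μ : Measure Λ) (a : ℝ → ℝ → Λ → ℝ)
    (x : ℝ) (y : Λ) : ℝ :=
  a 0 x y - abar μ a x

/-- `J_ε(n) = ε^{4/3} ∑_{j=nM}^{(n+1)M−1} ã(x_ε(nM), Tʲy)` with `M = ⌊ε^{-4/3}⌋`. -/
def Jeps {Λ : Type*} [MeasurableSpace Λ] (μ : Measure Λ) (a : ℝ → ℝ → Λ → ℝ)
    (b : ℝ → ℝ) (v : Λ → ℝ) (T : Λ → Λ) (ξ ε : ℝ) (y : Λ) (n : ℕ) : ℝ :=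
  ε ^ ((4:ℝ)/3) * ∑ j ∈ Finset.Ico (n * ⌊ε ^ (-((4:ℝ)/3))⌋₊) ((n+1) * ⌊ε ^ (-((4:ℝ)/3))⌋₊),
    atil μ a (slow a b v T ξ ε y (n * ⌊ε ^ (-((4:ℝ)/3))⌋₊)) (T^[j] y)

/-- `D_ε(t) = ε^{2/3} ∑_{n<⌊t ε^{-2/3}⌋} J_ε(n)`. -/
def Deps {Λ : Type*} [MeasurableSpace Λ] (μ : Measure Λ) (a : ℝ → ℝ → Λ → ℝ)
    (b : ℝ → ℝ) (v : Λ → ℝ) (T : Λ → Λ) (ξ ε : ℝ) (y : Λ) (t : ℝ) : ℝ :=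
  ε ^ ((2:ℝ)/3) * ∑ n ∈ Finset.range ⌊t * ε ^ (-((2:ℝ)/3))⌋₊, Jeps μ a b v T ξ ε y n


/-! ### Auxiliary lemmas -/

section Aux

variable {Λ : Type} [MeasurableSpace Λ]

lemma birkhoff_measurable {T : Λ → Λ} {v : Λ → ℝ} (hT : Measurable T) (hv : Measurable v)
    (n : ℕ) : Measurable (birkhoff T v n) := by
  unfold birkhoff
  exact Finset.measurable_sum _ fun j _ => hv.comp (hT.iterate j)

lemma birkhoff_Ico (T : Λ → Λ) (v : Λ → ℝ) (y : Λ) {m j : ℕ} (h : m ≤ j) :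
    ∑ i ∈ Finset.Ico m j, v (T^[i] y) = birkhoff T v (j - m) (T^[m] y) := by
  rw [birkhoff, Finset.sum_Ico_eq_sum_range]
  refine Finset.sum_congr rfl fun r _ => ?_
  rw [add_comm, Function.iterate_add_apply]

lemma slow_succ (a : ℝ → ℝ → Λ → ℝ) (v : Λ → ℝ) (T : Λ → Λ) (ξ ε : ℝ) (y : Λ) (n : ℕ) :
    slow a (fun _ => (1:ℝ)) v T ξ ε y (n+1)
      = slow a (fun _ => (1:ℝ)) v T ξ ε y n
        + ε^2 * a ε (slow a (fun _ => (1:ℝ)) v T ξ ε y n) (T^[n] y)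
        + ε * 1 * v (T^[n] y) := rfl

lemma slow_eq (a : ℝ → ℝ → Λ → ℝ) (v : Λ → ℝ) (T : Λ → Λ) (ξ ε : ℝ) (y : Λ) (n : ℕ) :
    slow a (fun _ => (1:ℝ)) v T ξ ε y n
      = ξ + ε^2 * ∑ j ∈ Finset.range n, a ε (slow a (fun _ => (1:ℝ)) v T ξ ε y j) (T^[j] y)
        + ε * birkhoff T v n y := by
  induction n with
  | zero => simp [slow, birkhoff]
  | succ n ih =>
    have hb : birkhoff T v (n+1) y = birkhoff T v n y + v (T^[n] y) := by
      rw [birkhoff, birkhoff, Finset.sum_range_succ]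
    rw [slow_succ, hb, Finset.sum_range_succ, ih]
    ring

lemma sum_split {m j : ℕ} (h : m ≤ j) (f : ℕ → ℝ) :
    ∑ i ∈ Finset.range j, f i = ∑ i ∈ Finset.range m, f i + ∑ i ∈ Finset.Ico m j, f i := by
  rw [Finset.range_eq_Ico, Finset.range_eq_Ico]
  exact (Finset.sum_Ico_consecutive f (Nat.zero_le m) h).symm

lemma slow_sub (a : ℝ → ℝ → Λ → ℝ) (v : Λ → ℝ) (T : Λ → Λ) (ξ ε : ℝ) (y : Λ)
    {m j : ℕ} (h : m ≤ j) :
    slow a (fun _ => (1:ℝ)) v T ξ ε y j - slow a (fun _ => (1:ℝ)) v T ξ ε y m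
      = ε^2 * ∑ i ∈ Finset.Ico m j, a ε (slow a (fun _ => (1:ℝ)) v T ξ ε y i) (T^[i] y)
        + ε * birkhoff T v (j - m) (T^[m] y) := by
  rw [slow_eq a v T ξ ε y j, slow_eq a v T ξ ε y m, ← birkhoff_Ico T v y h,
    sum_split h (fun i => a ε (slow a (fun _ => (1:ℝ)) v T ξ ε y i) (T^[i] y)),
    birkhoff, birkhoff, sum_split h (fun i => v (T^[i] y))]
  ring

lemma sum_range_mul_blocks (f : ℕ → ℝ) (K M : ℕ) :
    ∑ j ∈ Finset.range (K*M), f j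
      = ∑ n ∈ Finset.range K, ∑ j ∈ Finset.Ico (n*M) ((n+1)*M), f j := by
  induction K with
  | zero => simp
  | succ K ih =>
    rw [Finset.sum_range_succ, ← ih, Nat.succ_mul,
      sum_split (Nat.le_add_right (K*M) M) f]

section Abar

variable (μ : Measure Λ) [IsProbabilityMeasure μ]

lemma integrable_a0 {a : ℝ → ℝ → Λ → ℝ} (x : ℝ) (hmeas : Measurable (a 0 x))
    {Ca : ℝ} (hCa : ∀ y, |a 0 x y| ≤ Ca) : Integrable (fun y => a 0 x y) μ := by
  refine (integrable_const Ca).mono' hmeas.aestronglyMeasurable ?_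
  exact Eventually.of_forall fun y => by simpa [Real.norm_eq_abs] using hCa y

lemma abar_abs_le {a : ℝ → ℝ → Λ → ℝ} (x : ℝ) (hmeas : Measurable (a 0 x))
    {Ca : ℝ} (hCa : ∀ y, |a 0 x y| ≤ Ca) : |abar μ a x| ≤ Ca := by
  have hi := integrable_a0 μ x hmeas hCa
  calc |abar μ a x| = ‖∫ y, a 0 x y ∂μ‖ := by rw [Real.norm_eq_abs]; rfl
    _ ≤ ∫ y, ‖a 0 x y‖ ∂μ := norm_integral_le_integral_norm _
    _ ≤ ∫ _, Ca ∂μ := integral_mono hi.norm (integrable_const _)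
        (fun y => by simpa [Real.norm_eq_abs] using hCa y)
    _ = Ca := by simp

lemma abar_lip {a : ℝ → ℝ → Λ → ℝ} (x x' : ℝ)
    (hmeas : ∀ z, Measurable (a 0 z))
    {Ca : ℝ} (hCa : ∀ z y, |a 0 z y| ≤ Ca)
    {L : ℝ} (hL : ∀ y, |a 0 x y - a 0 x' y| ≤ L * |x - x'|) :
    |abar μ a x - abar μ a x'| ≤ L * |x - x'| := by
  have hi := integrable_a0 μ x (hmeas x) (fun y => hCa x y)
  have hi' := integrable_a0 μ x' (hmeas x') (fun y => hCa x' y)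
  have hsub : abar μ a x - abar μ a x' = ∫ y, (a 0 x y - a 0 x' y) ∂μ :=
    (integral_sub hi hi').symm
  calc |abar μ a x - abar μ a x'| = ‖∫ y, (a 0 x y - a 0 x' y) ∂μ‖ := by
        rw [Real.norm_eq_abs, hsub]
    _ ≤ ∫ y, ‖a 0 x y - a 0 x' y‖ ∂μ := norm_integral_le_integral_norm _
    _ ≤ ∫ _, L * |x - x'| ∂μ := integral_mono (hi.sub hi').norm (integrable_const _)
        (fun y => by simpa [Real.norm_eq_abs] using hL y)
    _ = L * |x - x'| := by simp

end Abar

lemma riemann_block (f : ℝ → ℝ) (hf : Continuous f) {h D : ℝ} (hh : 0 < h) (hD : 0 ≤ D)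
    (c : ℕ → ℝ) (N : ℕ)
    (hcl : ∀ n < N, ∀ s ∈ Set.Icc ((n:ℝ)*h) (((n:ℝ)+1)*h), |f s - c n| ≤ D) :
    |(∫ s in (0:ℝ)..((N:ℝ)*h), f s) - h * ∑ n ∈ Finset.range N, c n| ≤ N * (h * D) := by
  induction N with
  | zero => simp
  | succ N ih =>
    have h1 := ih fun n hn => hcl n (Nat.lt_succ_of_lt hn)
    have hint1 : IntervalIntegrable f MeasureTheory.volume 0 ((N:ℝ)*h) :=
      hf.intervalIntegrable _ _
    have hint2 : IntervalIntegrable f MeasureTheory.volume ((N:ℝ)*h) (((N:ℝ)+1)*h) :=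
      hf.intervalIntegrable _ _
    have hNh : (N:ℝ)*h ≤ ((N:ℝ)+1)*h := by nlinarith
    have hsplit : (∫ s in (0:ℝ)..(((N:ℝ)+1)*h), f s)
        = (∫ s in (0:ℝ)..((N:ℝ)*h), f s) + ∫ s in ((N:ℝ)*h)..(((N:ℝ)+1)*h), f s :=
      (intervalIntegral.integral_add_adjacent_intervals hint1 hint2).symm
    have heq : (∫ s in ((N:ℝ)*h)..(((N:ℝ)+1)*h), f s) - h * c N
        = ∫ s in ((N:ℝ)*h)..(((N:ℝ)+1)*h), (f s - c N) := by
      rw [intervalIntegral.integral_sub hint2 intervalIntegrable_const,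
        intervalIntegral.integral_const, smul_eq_mul]
      ring
    have hlast : |(∫ s in ((N:ℝ)*h)..(((N:ℝ)+1)*h), f s) - h * c N| ≤ h * D := by
      rw [heq]
      have hb : ∀ s ∈ Set.uIoc ((N:ℝ)*h) (((N:ℝ)+1)*h), ‖f s - c N‖ ≤ D := by
        intro s hs
        rw [Set.uIoc_of_le hNh] at hs
        exact hcl N (Nat.lt_succ_self N) s ⟨hs.1.le, hs.2⟩
      calc |∫ s in ((N:ℝ)*h)..(((N:ℝ)+1)*h), (f s - c N)|
          ≤ D * |(((N:ℝ)+1)*h) - (N:ℝ)*h| :=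
            intervalIntegral.norm_integral_le_of_norm_le_const hb
        _ = h * D := by rw [show (((N:ℝ)+1)*h) - (N:ℝ)*h = h by ring, abs_of_pos hh]; ring
    have hcast : ((N+1 : ℕ):ℝ) = (N:ℝ)+1 := by push_cast; ring
    rw [Finset.sum_range_succ, hcast, hsplit]
    have htri : |(∫ s in (0:ℝ)..((N:ℝ)*h), f s) + (∫ s in ((N:ℝ)*h)..(((N:ℝ)+1)*h), f s)
        - h * (∑ n ∈ Finset.range N, c n + c N)|
        ≤ |(∫ s in (0:ℝ)..((N:ℝ)*h), f s) - h * ∑ n ∈ Finset.range N, c n|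
          + |(∫ s in ((N:ℝ)*h)..(((N:ℝ)+1)*h), f s) - h * c N| := by
      have := abs_add_le ((∫ s in (0:ℝ)..((N:ℝ)*h), f s) - h * ∑ n ∈ Finset.range N, c n)
        ((∫ s in ((N:ℝ)*h)..(((N:ℝ)+1)*h), f s) - h * c N)
      calc |(∫ s in (0:ℝ)..((N:ℝ)*h), f s) + (∫ s in ((N:ℝ)*h)..(((N:ℝ)+1)*h), f s)
          - h * (∑ n ∈ Finset.range N, c n + c N)|
          = |((∫ s in (0:ℝ)..((N:ℝ)*h), f s) - h * ∑ n ∈ Finset.range N, c n)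
            + ((∫ s in ((N:ℝ)*h)..(((N:ℝ)+1)*h), f s) - h * c N)| := by ring_nf
        _ ≤ _ := this
    refine le_trans htri ?_
    push_cast
    linarith

end Aux

set_option maxHeartbeats 1000000 in
/-- **Proposition 5.5 (decomposition of `x̂_ε`, case `b ≡ 1`).**
`x̂_ε(t) = ξ + ∫₀ᵗ ā(x̂_ε(s)) ds + W_ε(t) + D_ε(t) + E_ε(t)` where the remainder
`E_ε` (defined by this identity) satisfies `‖sup_{[0,1]} |E_ε|‖_{L^q(μ)} ≤ C ε^{1/3}`. -/
theorem decomposition_remainder_estimate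
    {Λ : Type} [MeasurableSpace Λ] (μ : Measure Λ) [IsProbabilityMeasure μ]
    (T : Λ → Λ) (hT : MeasurePreserving T μ μ) (hTerg : Ergodic T μ)
    -- `v ∈ L^∞(Λ)`
    (v : Λ → ℝ) (hvmeas : Measurable v) (Kv : ℝ) (hvbd : ∀ y, |v y| ≤ Kv)
    -- the family `a_ε` and the regularity conditions (i)-(iii)
    (a : ℝ → ℝ → Λ → ℝ) (hameas : ∀ ε x, Measurable (a ε x))
    (Ca : ℝ) (hreg1 : ∀ ε ∈ Set.Icc (0:ℝ) 1, ∀ (x : ℝ) (y : Λ), |a ε x y| ≤ Ca)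
    (Creg : ℝ) (hreg2 : ∀ ε ∈ Set.Ioo (0:ℝ) 1, ∀ (x : ℝ) (y : Λ),
      |a ε x y - a 0 x y| ≤ Creg * ε ^ ((1:ℝ)/3))
    (L : ℝ) (hL : 0 ≤ L)
    (hreg3 : ∀ (x x' : ℝ) (y : Λ), |a 0 x y - a 0 x' y| ≤ L * |x - x'|)
    (ξ : ℝ)
    -- `x̂_ε(t) = x_ε(t ε⁻²)`, linearly interpolated, as a random element of `C[0,1]`
    (Xhat : ℝ → Λ → C01)
    (hXhat : ∀ ε ∈ Set.Ioo (0:ℝ) 1, ∀ (y : Λ) (t : Set.Icc (0:ℝ) 1),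
      Xhat ε y t = slow a (fun _ => (1:ℝ)) v T ξ ε y ⌊(t:ℝ)/ε^2⌋₊
        + ((t:ℝ)/ε^2 - (⌊(t:ℝ)/ε^2⌋₊ : ℝ)) *
          (slow a (fun _ => (1:ℝ)) v T ξ ε y (⌊(t:ℝ)/ε^2⌋₊ + 1) - slow a (fun _ => (1:ℝ)) v T ξ ε y ⌊(t:ℝ)/ε^2⌋₊))
    -- `W_ε(t) = ε v_{t ε⁻²}`, linearly interpolated
    (Weps : ℝ → Λ → C01)
    (hWeps : ∀ ε ∈ Set.Ioo (0:ℝ) 1, ∀ (y : Λ) (t : Set.Icc (0:ℝ) 1),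
      Weps ε y t = ε * (birkhoff T v ⌊(t:ℝ)/ε^2⌋₊ y
        + ((t:ℝ)/ε^2 - (⌊(t:ℝ)/ε^2⌋₊ : ℝ)) * v (T^[⌊(t:ℝ)/ε^2⌋₊] y)))
    (q : ℝ) (hq : 1 ≤ q) (Cm : ℝ)
    -- moment condition (5.2)
    (h52 : ∀ n : ℕ, 1 ≤ n →
      eLpNorm (birkhoff T v n) (ENNReal.ofReal q) μ
        ≤ ENNReal.ofReal (Cm * (n:ℝ) ^ ((1:ℝ)/2)))
    :
    ∃ C : ℝ, 0 < C ∧ ∀ ε ∈ Set.Ioo (0:ℝ) 1,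
      eLpNorm (fun y => ⨆ t : Set.Icc (0:ℝ) 1,
          |Xhat ε y t - ξ - (∫ s in (0:ℝ)..(t:ℝ), abar μ a (ev (Xhat ε y) s))
            - Weps ε y t - Deps μ a (fun _ => (1:ℝ)) v T ξ ε y (t:ℝ)|)
        (ENNReal.ofReal q) μ ≤ ENNReal.ofReal (C * ε ^ ((1:ℝ)/3)) := by
  classical
  have hne : Nonempty Λ := by
    by_contra hc
    rw [not_nonempty_iff] at hc
    have h1 : μ Set.univ = 1 := measure_univ
    rw [Set.univ_eq_empty_iff.mpr hc] at h1
    simp at h1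
  obtain ⟨y₀⟩ := hne
  have hCa0 : 0 ≤ Ca := le_trans (abs_nonneg _) (hreg1 0 ⟨le_rfl, zero_le_one⟩ 0 y₀)
  have hKv0 : 0 ≤ Kv := le_trans (abs_nonneg _) (hvbd y₀)
  have hCreg0 : 0 ≤ Creg := by
    have h2 := hreg2 (1/2) ⟨by norm_num, by norm_num⟩ 0 y₀
    have hp : (0:ℝ) < ((1:ℝ)/2) ^ ((1:ℝ)/3) := Real.rpow_pos_of_pos (by norm_num) _
    have hple : ((1:ℝ)/2) ^ ((1:ℝ)/3) ≤ 1 :=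
      Real.rpow_le_one (by norm_num) (by norm_num) (by norm_num)
    nlinarith [abs_nonneg (a (1/2) 0 y₀ - a 0 0 y₀)]
  set Cm' : ℝ := max Cm 0 with hCm'def
  have hCm'0 : 0 ≤ Cm' := le_max_right _ _
  have h52' : ∀ n : ℕ, 1 ≤ n → eLpNorm (birkhoff T v n) (ENNReal.ofReal q) μ
      ≤ ENNReal.ofReal (Cm' * (n:ℝ) ^ ((1:ℝ)/2)) := by
    intro n hn
    refine (h52 n hn).trans (ENNReal.ofReal_le_ofReal ?_)
    have h1 : (0:ℝ) ≤ (n:ℝ) ^ ((1:ℝ)/2) := Real.rpow_nonneg (Nat.cast_nonneg n) _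
    have h2 : Cm ≤ Cm' := le_max_left _ _
    nlinarith
  set c1 : ℝ := Creg + 8*Ca + L*(Ca+Kv) + 2*L*Ca with hc1def
  have hc10 : 0 ≤ c1 := by positivity
  refine ⟨c1 + 2*L*Cm' + 1, by positivity, ?_⟩
  intro ε hε
  obtain ⟨hε0, hε1⟩ := hε
  set u : ℝ := ε ^ ((1:ℝ)/3) with hu
  have hu0 : 0 < u := Real.rpow_pos_of_pos hε0 _
  have hu1 : u ≤ 1 := Real.rpow_le_one hε0.le hε1.le (by norm_num)
  have hu3 : u ^ 3 = ε := by
    rw [hu, ← Real.rpow_natCast (ε ^ ((1:ℝ)/3)) 3, ← Real.rpow_mul hε0.le]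
    norm_num
  have h23 : ε ^ ((2:ℝ)/3) = u ^ 2 := by
    rw [hu, ← Real.rpow_natCast (ε ^ ((1:ℝ)/3)) 2, ← Real.rpow_mul hε0.le]
    norm_num
  have h43 : ε ^ ((4:ℝ)/3) = u ^ 4 := by
    rw [hu, ← Real.rpow_natCast (ε ^ ((1:ℝ)/3)) 4, ← Real.rpow_mul hε0.le]
    norm_num
  have h23' : ε ^ (-((2:ℝ)/3)) = (u ^ 2)⁻¹ := by
    rw [Real.rpow_neg hε0.le, h23]
  have h43' : ε ^ (-((4:ℝ)/3)) = (u ^ 4)⁻¹ := by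
    rw [Real.rpow_neg hε0.le, h43]
  have hε2 : ε ^ 2 = u ^ 6 := by rw [← hu3]; ring
  have hε2pos : (0:ℝ) < ε ^ 2 := by positivity
  have hup : ∀ k l : ℕ, l ≤ k → u ^ k ≤ u ^ l :=
    fun k l h => pow_le_pow_of_le_one hu0.le hu1 h
  set M := ⌊ε ^ (-((4:ℝ)/3))⌋₊ with hMdef
  set Kx := ⌊ε ^ (-((2:ℝ)/3))⌋₊ with hKxdef
  have hM4 : (M:ℝ) * u^4 ≤ 1 := by
    have h1 : (M:ℝ) ≤ ε ^ (-((4:ℝ)/3)) := Nat.floor_le (by positivity)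
    rw [h43'] at h1
    have h2 := mul_le_mul_of_nonneg_right h1 (by positivity : (0:ℝ) ≤ u^4)
    rwa [inv_mul_cancel₀ (by positivity : (u:ℝ)^4 ≠ 0)] at h2
  have hKx2 : (Kx:ℝ) * u^2 ≤ 1 := by
    have h1 : (Kx:ℝ) ≤ ε ^ (-((2:ℝ)/3)) := Nat.floor_le (by positivity)
    rw [h23'] at h1
    have h2 := mul_le_mul_of_nonneg_right h1 (by positivity : (0:ℝ) ≤ u^2)
    rwa [inv_mul_cancel₀ (by positivity : (u:ℝ)^2 ≠ 0)] at h2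
  have hMgt : 1 < ((M:ℝ)+1) * u^4 := by
    have h1 := Nat.lt_floor_add_one (ε ^ (-((4:ℝ)/3)))
    rw [← hMdef, h43'] at h1
    have h2 := mul_lt_mul_of_pos_right h1 (by positivity : (0:ℝ) < u^4)
    rwa [inv_mul_cancel₀ (by positivity : (u:ℝ)^4 ≠ 0)] at h2
  -- the random part `G`
  set P := Finset.range Kx ×ˢ Finset.range M with hPdef
  set F : ℕ × ℕ → Λ → ℝ :=
    fun p z => 2*L*ε^3 * |birkhoff T v p.2 (T^[p.1 * M] z)| with hFdef
  set G : Λ → ℝ := fun z => ∑ p ∈ P, F p z with hGdef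
  have hFnn : ∀ p z, 0 ≤ F p z := fun p z => by
    rw [hFdef]; positivity
  have hGnn : ∀ z, 0 ≤ G z := fun z => Finset.sum_nonneg fun p _ => hFnn p z
  have hFmeas : ∀ p : ℕ × ℕ, Measurable (F p) := by
    intro p
    rw [hFdef]
    exact measurable_const.mul
      ((birkhoff_measurable hT.measurable hvmeas p.2).comp (hT.measurable.iterate _)).abs
  have hGmeas : Measurable G := by
    rw [hGdef]
    exact Finset.measurable_sum _ fun p _ => hFmeas p
  -- frequently used bounds
  have hreg1' : ∀ (x : ℝ) (yy : Λ), |a ε x yy| ≤ Ca := fun x yy =>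
    hreg1 ε ⟨hε0.le, hε1.le⟩ x yy
  have hreg10 : ∀ (x : ℝ) (yy : Λ), |a 0 x yy| ≤ Ca := fun x yy =>
    hreg1 0 ⟨le_rfl, zero_le_one⟩ x yy
  have habar_bd : ∀ x : ℝ, |abar μ a x| ≤ Ca := fun x =>
    abar_abs_le μ x (hameas 0 x) (fun yy => hreg10 x yy)
  have habar_lip : ∀ p q : ℝ, |abar μ a p - abar μ a q| ≤ L * |p - q| := fun p q =>
    abar_lip μ p q (hameas 0) (fun zz yy => hreg10 zz yy) (fun yy => hreg3 p q yy)
  have hatil_bd : ∀ (x : ℝ) (yy : Λ), |atil μ a x yy| ≤ 2*Ca := fun x yy => by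
    rw [atil]
    calc |a 0 x yy - abar μ a x| ≤ |a 0 x yy| + |abar μ a x| := abs_sub _ _
      _ ≤ Ca + Ca := add_le_add (hreg10 x yy) (habar_bd x)
      _ = 2*Ca := by ring
  have hatil_lip : ∀ (p q : ℝ) (yy : Λ),
      |atil μ a p yy - atil μ a q yy| ≤ 2*L*|p - q| := fun p q yy => by
    rw [atil, atil]
    calc |a 0 p yy - abar μ a p - (a 0 q yy - abar μ a q)|
        = |(a 0 p yy - a 0 q yy) - (abar μ a p - abar μ a q)| := by ring_nf
      _ ≤ |a 0 p yy - a 0 q yy| + |abar μ a p - abar μ a q| := abs_sub _ _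
      _ ≤ L*|p-q| + L*|p-q| := add_le_add (hreg3 p q yy) (habar_lip p q)
      _ = 2*L*|p-q| := by ring
  -- the key pointwise estimate
  have key : ∀ (z : Λ) (t : Set.Icc (0:ℝ) 1),
      |Xhat ε z t - ξ - (∫ s in (0:ℝ)..(t:ℝ), abar μ a (ev (Xhat ε z) s))
        - Weps ε z t - Deps μ a (fun _ => (1:ℝ)) v T ξ ε z (t:ℝ)| ≤ c1 * u + G z := by
    intro z t
    set xx : ℕ → ℝ := slow a (fun _ => (1:ℝ)) v T ξ ε z with hxx
    set N := ⌊(t:ℝ)/ε^2⌋₊ with hNdef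
    set K := ⌊(t:ℝ) * ε ^ (-((2:ℝ)/3))⌋₊ with hKdef
    have ht0 : (0:ℝ) ≤ (t:ℝ) := t.2.1
    have ht1 : (t:ℝ) ≤ 1 := t.2.2
    have hu6u : u^6 ≤ u := by simpa using hup 6 1
    have hu3u : u^3 ≤ u := by simpa using hup 3 1
    have hu2u : u^2 ≤ u := by simpa using hup 2 1
    have hNle : (N:ℝ) * ε^2 ≤ (t:ℝ) := by
      have h := Nat.floor_le (show (0:ℝ) ≤ (t:ℝ)/ε^2 by positivity)
      rw [← hNdef] at h
      exact (le_div_iff₀ hε2pos).mp h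
    have hNlt : (t:ℝ) < ((N:ℝ)+1) * ε^2 := by
      have h := Nat.lt_floor_add_one ((t:ℝ)/ε^2)
      rw [← hNdef] at h
      exact (div_lt_iff₀ hε2pos).mp h
    have hfrac0 : 0 ≤ (t:ℝ)/ε^2 - (N:ℝ) := by
      have h := Nat.floor_le (show (0:ℝ) ≤ (t:ℝ)/ε^2 by positivity)
      rw [← hNdef] at h; linarith
    have hfrac1 : (t:ℝ)/ε^2 - (N:ℝ) ≤ 1 := by
      have h := Nat.lt_floor_add_one ((t:ℝ)/ε^2)
      rw [← hNdef] at h; linarith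
    have hstep : ∀ n : ℕ, |xx (n+1) - xx n| ≤ ε^2*Ca + ε*Kv := by
      intro n
      have he : xx (n+1) - xx n = ε^2 * a ε (xx n) (T^[n] z) + ε * (1 * v (T^[n] z)) := by
        rw [hxx, slow_succ]; ring
      rw [he]
      have e1 : |ε^2 * a ε (xx n) (T^[n] z)| ≤ ε^2 * Ca := by
        rw [abs_mul, abs_of_pos hε2pos]
        exact mul_le_mul_of_nonneg_left (hreg1' _ _) hε2pos.le
      have e2 : |ε * (1 * v (T^[n] z))| ≤ ε * Kv := by
        rw [one_mul, abs_mul, abs_of_pos hε0]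
        exact mul_le_mul_of_nonneg_left (hvbd _) hε0.le
      calc |ε^2 * a ε (xx n) (T^[n] z) + ε * (1 * v (T^[n] z))|
          ≤ |ε^2 * a ε (xx n) (T^[n] z)| + |ε * (1 * v (T^[n] z))| := abs_add_le _ _
        _ ≤ ε^2*Ca + ε*Kv := add_le_add e1 e2
    -- the linear-interpolation identity
    have hXW : Xhat ε z t - ξ - Weps ε z t
        = ε^2 * ∑ j ∈ Finset.range N, a ε (xx j) (T^[j] z)
          + ((t:ℝ)/ε^2 - (N:ℝ)) * (ε^2 * a ε (xx N) (T^[N] z)) := by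
      rw [hXhat ε ⟨hε0, hε1⟩ z t, hWeps ε ⟨hε0, hε1⟩ z t, hxx, ← hNdef,
        slow_succ a v T ξ ε z N, slow_eq a v T ξ ε z N, birkhoff]
      ring
    -- the form of `D_ε`
    have hDeq : Deps μ a (fun _ => (1:ℝ)) v T ξ ε z (t:ℝ)
        = ε^2 * ∑ n ∈ Finset.range K, ∑ j ∈ Finset.Ico (n*M) ((n+1)*M),
            atil μ a (xx (n*M)) (T^[j] z) := by
      simp only [Deps, Jeps]
      rw [← hMdef, ← hKdef, ← hxx, Finset.mul_sum, ← Finset.mul_sum, ← Finset.mul_sum,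
        h23, h43, hε2]
      ring
    -- evaluation of `x̂_ε` at an arbitrary time in `[0,1]`
    have hXhat' : ∀ s : ℝ, ∀ hsmem : s ∈ Set.Icc (0:ℝ) 1, ev (Xhat ε z) s
        = xx ⌊s/ε^2⌋₊ + (s/ε^2 - (⌊s/ε^2⌋₊ : ℝ)) * (xx (⌊s/ε^2⌋₊+1) - xx ⌊s/ε^2⌋₊) := by
      intro s hsmem
      have h1 : ev (Xhat ε z) s = Xhat ε z ⟨s, hsmem⟩ := by
        unfold ev
        congr 1
        exact Set.projIcc_of_mem _ hsmem
      rw [h1, hxx]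
      exact hXhat ε ⟨hε0, hε1⟩ z ⟨s, hsmem⟩
    -- the Riemann-sum estimate
    have hfcont : Continuous (fun s => abar μ a (ev (Xhat ε z) s)) := by
      have hlip : LipschitzWith (Real.toNNReal L) (abar μ a) := by
        apply LipschitzWith.of_dist_le_mul
        intro p q'
        rw [Real.dist_eq, Real.dist_eq, Real.coe_toNNReal L hL]
        exact habar_lip p q'
      exact hlip.continuous.comp ((Xhat ε z).continuous.comp continuous_projIcc)
    have hclose : ∀ n < N, ∀ s ∈ Set.Icc ((n:ℝ)*ε^2) (((n:ℝ)+1)*ε^2),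
        |abar μ a (ev (Xhat ε z) s) - abar μ a (xx n)| ≤ L*(ε^2*Ca + ε*Kv) := by
      intro n hn s hs
      have hn1 : ((n:ℝ)+1) ≤ (N:ℝ) := by exact_mod_cast Nat.succ_le_of_lt hn
      have hs0 : 0 ≤ s := le_trans (by positivity) hs.1
      have hs1 : s ≤ 1 := by
        have hx : ((n:ℝ)+1)*ε^2 ≤ (N:ℝ)*ε^2 := mul_le_mul_of_nonneg_right hn1 hε2pos.le
        linarith only [hs.2, hx, hNle, ht1]
      have hsmem : s ∈ Set.Icc (0:ℝ) 1 := ⟨hs0, hs1⟩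
      have hev : |ev (Xhat ε z) s - xx n| ≤ ε^2*Ca + ε*Kv := by
        rw [hXhat' s hsmem]
        set j := ⌊s/ε^2⌋₊ with hjdef
        have hjn : n ≤ j := Nat.le_floor ((le_div_iff₀ hε2pos).mpr hs.1)
        have hjn1 : j ≤ n+1 := by
          have h1 : s/ε^2 ≤ ((n+1:ℕ):ℝ) := by
            push_cast
            rw [div_le_iff₀ hε2pos]
            linarith [hs.2]
          calc j ≤ ⌊((n+1:ℕ):ℝ)⌋₊ := Nat.floor_le_floor h1
            _ = n+1 := Nat.floor_natCast _
        rcases Nat.lt_or_ge j (n+1) with hlt | hge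
        · have hj : j = n := le_antisymm (Nat.lt_succ_iff.mp hlt) hjn
          rw [hj]
          have hf0' : 0 ≤ s/ε^2 - (n:ℝ) := by
            rw [sub_nonneg, le_div_iff₀ hε2pos]; exact hs.1
          have hf1' : s/ε^2 - (n:ℝ) ≤ 1 := by
            rw [sub_le_iff_le_add, div_le_iff₀ hε2pos]
            linarith [hs.2]
          have he : xx n + (s/ε^2 - (n:ℝ))*(xx (n+1) - xx n) - xx n
              = (s/ε^2 - (n:ℝ))*(xx (n+1) - xx n) := by ring
          rw [he, abs_mul, abs_of_nonneg hf0']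
          calc (s/ε^2 - (n:ℝ)) * |xx (n+1) - xx n| ≤ 1 * |xx (n+1) - xx n| :=
              mul_le_mul_of_nonneg_right hf1' (abs_nonneg _)
            _ = |xx (n+1) - xx n| := one_mul _
            _ ≤ ε^2*Ca + ε*Kv := hstep n
        · have hj : j = n+1 := le_antisymm hjn1 hge
          have h1 := Nat.floor_le (show (0:ℝ) ≤ s/ε^2 by positivity)
          rw [← hjdef, hj] at h1
          have h2 : s/ε^2 ≤ (n:ℝ)+1 := by
            rw [div_le_iff₀ hε2pos]; linarith [hs.2]
          have hsv : s/ε^2 = (n:ℝ)+1 := le_antisymm h2 (by push_cast at h1; linarith)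
          rw [hj, hsv]
          have he : xx (n+1) + ((n:ℝ)+1 - ((n+1:ℕ):ℝ))*(xx (n+1+1) - xx (n+1)) - xx n
              = xx (n+1) - xx n := by push_cast; ring
          rw [he]
          exact hstep n
      calc |abar μ a (ev (Xhat ε z) s) - abar μ a (xx n)|
          ≤ L * |ev (Xhat ε z) s - xx n| := habar_lip _ _
        _ ≤ L*(ε^2*Ca + ε*Kv) := mul_le_mul_of_nonneg_left hev hL
    -- bound for `E3`
    have hE3 : |ε^2 * ∑ j ∈ Finset.range N, abar μ a (xx j)
        - ∫ s in (0:ℝ)..(t:ℝ), abar μ a (ev (Xhat ε z) s)| ≤ L*(Ca+Kv)*u + Ca*u := by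
      have hD0nn : (0:ℝ) ≤ L*(ε^2*Ca + ε*Kv) := by positivity
      have hrb := riemann_block (fun s => abar μ a (ev (Xhat ε z) s)) hfcont hε2pos hD0nn
        (fun n => abar μ a (xx n)) N hclose
      have hint1 : IntervalIntegrable (fun s => abar μ a (ev (Xhat ε z) s))
          MeasureTheory.volume 0 ((N:ℝ)*ε^2) := hfcont.intervalIntegrable _ _
      have hint2 : IntervalIntegrable (fun s => abar μ a (ev (Xhat ε z) s))
          MeasureTheory.volume ((N:ℝ)*ε^2) (t:ℝ) := hfcont.intervalIntegrable _ _
      have hsplitI : (∫ s in (0:ℝ)..(t:ℝ), abar μ a (ev (Xhat ε z) s))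
          = (∫ s in (0:ℝ)..((N:ℝ)*ε^2), abar μ a (ev (Xhat ε z) s))
            + ∫ s in ((N:ℝ)*ε^2)..(t:ℝ), abar μ a (ev (Xhat ε z) s) :=
        (intervalIntegral.integral_add_adjacent_intervals hint1 hint2).symm
      have htail : |∫ s in ((N:ℝ)*ε^2)..(t:ℝ), abar μ a (ev (Xhat ε z) s)| ≤ Ca * ε^2 := by
        have hb : ∀ s ∈ Set.uIoc ((N:ℝ)*ε^2) (t:ℝ), ‖abar μ a (ev (Xhat ε z) s)‖ ≤ Ca :=
          fun s _ => by rw [Real.norm_eq_abs]; exact habar_bd _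
        calc |∫ s in ((N:ℝ)*ε^2)..(t:ℝ), abar μ a (ev (Xhat ε z) s)|
            ≤ Ca * |(t:ℝ) - (N:ℝ)*ε^2| :=
              intervalIntegral.norm_integral_le_of_norm_le_const hb
          _ ≤ Ca * ε^2 := by
              rw [abs_of_nonneg (by linarith only [hNle])]
              exact mul_le_mul_of_nonneg_left (by linarith only [hNlt]) hCa0
      have hcomb : |ε^2 * ∑ j ∈ Finset.range N, abar μ a (xx j)
          - ∫ s in (0:ℝ)..(t:ℝ), abar μ a (ev (Xhat ε z) s)|
          ≤ (N:ℝ) * (ε^2 * (L*(ε^2*Ca + ε*Kv))) + Ca*ε^2 := by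
        rw [hsplitI]
        have he : ε^2 * ∑ j ∈ Finset.range N, abar μ a (xx j)
            - ((∫ s in (0:ℝ)..((N:ℝ)*ε^2), abar μ a (ev (Xhat ε z) s))
              + ∫ s in ((N:ℝ)*ε^2)..(t:ℝ), abar μ a (ev (Xhat ε z) s))
            = -((∫ s in (0:ℝ)..((N:ℝ)*ε^2), abar μ a (ev (Xhat ε z) s))
                - ε^2 * ∑ j ∈ Finset.range N, abar μ a (xx j))
              + -(∫ s in ((N:ℝ)*ε^2)..(t:ℝ), abar μ a (ev (Xhat ε z) s)) := by ring
        rw [he]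
        calc |_ + _| ≤ |-((∫ s in (0:ℝ)..((N:ℝ)*ε^2), abar μ a (ev (Xhat ε z) s))
                - ε^2 * ∑ j ∈ Finset.range N, abar μ a (xx j))|
              + |-(∫ s in ((N:ℝ)*ε^2)..(t:ℝ), abar μ a (ev (Xhat ε z) s))| := abs_add_le _ _
          _ = |(∫ s in (0:ℝ)..((N:ℝ)*ε^2), abar μ a (ev (Xhat ε z) s))
                - ε^2 * ∑ j ∈ Finset.range N, abar μ a (xx j)|
              + |∫ s in ((N:ℝ)*ε^2)..(t:ℝ), abar μ a (ev (Xhat ε z) s)| := by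
              rw [abs_neg, abs_neg]
          _ ≤ (N:ℝ) * (ε^2 * (L*(ε^2*Ca + ε*Kv))) + Ca*ε^2 := add_le_add hrb htail
      refine hcomb.trans ?_
      have hNe2 : (N:ℝ)*ε^2 ≤ 1 := le_trans hNle ht1
      have h1 : (N:ℝ)*(ε^2*(L*(ε^2*Ca+ε*Kv))) ≤ L*(ε^2*Ca+ε*Kv) := by
        calc (N:ℝ)*(ε^2*(L*(ε^2*Ca+ε*Kv))) = ((N:ℝ)*ε^2)*(L*(ε^2*Ca+ε*Kv)) := by ring
          _ ≤ 1*(L*(ε^2*Ca+ε*Kv)) := mul_le_mul_of_nonneg_right hNe2 hD0nn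
          _ = L*(ε^2*Ca+ε*Kv) := one_mul _
      have e1 : ε^2*Ca ≤ Ca*u := by
        rw [hε2]
        calc u^6*Ca = Ca*u^6 := by ring
          _ ≤ Ca*u := mul_le_mul_of_nonneg_left hu6u hCa0
      have e2 : ε*Kv ≤ Kv*u := by
        rw [← hu3]
        calc u^3*Kv = Kv*u^3 := by ring
          _ ≤ Kv*u := mul_le_mul_of_nonneg_left hu3u hKv0
      have h2 : L*(ε^2*Ca+ε*Kv) ≤ L*(Ca+Kv)*u := by
        calc L*(ε^2*Ca+ε*Kv) ≤ L*(Ca*u+Kv*u) :=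
            mul_le_mul_of_nonneg_left (add_le_add e1 e2) hL
          _ = L*(Ca+Kv)*u := by ring
      have h3 : Ca*ε^2 ≤ Ca*u := by
        rw [hε2]
        exact mul_le_mul_of_nonneg_left hu6u hCa0
      exact add_le_add (h1.trans h2) h3
    -- bound for `E1`
    have hE1 : |ε^2 * ∑ j ∈ Finset.range N, (a ε (xx j) (T^[j] z) - a 0 (xx j) (T^[j] z))|
        ≤ Creg * u := by
      rw [abs_mul, abs_of_pos hε2pos]
      have h1 : |∑ j ∈ Finset.range N, (a ε (xx j) (T^[j] z) - a 0 (xx j) (T^[j] z))|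
          ≤ (N:ℝ) * (Creg * u) := by
        calc |∑ j ∈ Finset.range N, (a ε (xx j) (T^[j] z) - a 0 (xx j) (T^[j] z))|
            ≤ ∑ j ∈ Finset.range N, |a ε (xx j) (T^[j] z) - a 0 (xx j) (T^[j] z)| :=
              Finset.abs_sum_le_sum_abs _ _
          _ ≤ (Finset.range N).card • (Creg * u) := Finset.sum_le_card_nsmul _ _ _
              (fun j _ => by rw [hu]; exact hreg2 ε ⟨hε0, hε1⟩ (xx j) (T^[j] z))
          _ = (N:ℝ) * (Creg*u) := by rw [Finset.card_range, nsmul_eq_mul]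
      calc ε^2 * |∑ j ∈ Finset.range N, (a ε (xx j) (T^[j] z) - a 0 (xx j) (T^[j] z))|
          ≤ ε^2 * ((N:ℝ)*(Creg*u)) := mul_le_mul_of_nonneg_left h1 hε2pos.le
        _ = ((N:ℝ)*ε^2) * (Creg*u) := by ring
        _ ≤ 1 * (Creg*u) := mul_le_mul_of_nonneg_right (le_trans hNle ht1) (by positivity)
        _ = Creg*u := one_mul _
    -- bound for `E2`
    have hE2 : |((t:ℝ)/ε^2 - (N:ℝ)) * (ε^2 * a ε (xx N) (T^[N] z))| ≤ Ca * u := by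
      have h1 := hreg1' (xx N) (T^[N] z)
      rw [abs_mul, abs_mul, abs_of_nonneg hfrac0, abs_of_pos hε2pos]
      calc ((t:ℝ)/ε^2 - (N:ℝ)) * (ε^2 * |a ε (xx N) (T^[N] z)|) ≤ 1 * (ε^2 * Ca) :=
          mul_le_mul hfrac1 (mul_le_mul_of_nonneg_left h1 hε2pos.le) (by positivity) zero_le_one
        _ = Ca * u^6 := by rw [hε2]; ring
        _ ≤ Ca * u := mul_le_mul_of_nonneg_left hu6u hCa0
    -- bound for `E4`
    have hKt : (K:ℝ) * u^2 ≤ (t:ℝ) := by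
      have h := Nat.floor_le (show (0:ℝ) ≤ (t:ℝ) * ε ^ (-((2:ℝ)/3)) by positivity)
      rw [← hKdef, h23'] at h
      have h2 := mul_le_mul_of_nonneg_right h (by positivity : (0:ℝ) ≤ u^2)
      rwa [mul_assoc, inv_mul_cancel₀ (by positivity : (u:ℝ)^2 ≠ 0), mul_one] at h2
    have hKlt : (t:ℝ) < ((K:ℝ)+1) * u^2 := by
      have h := Nat.lt_floor_add_one ((t:ℝ) * ε ^ (-((2:ℝ)/3)))
      rw [← hKdef, h23'] at h
      have h2 := mul_lt_mul_of_pos_right h (by positivity : (0:ℝ) < u^2)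
      rwa [mul_assoc, inv_mul_cancel₀ (by positivity : (u:ℝ)^2 ≠ 0), mul_one] at h2
    have hKMN : K * M ≤ N := by
      rw [hNdef]
      refine Nat.le_floor ?_
      rw [le_div_iff₀ hε2pos, hε2]
      push_cast
      calc (K:ℝ) * (M:ℝ) * u^6 = ((K:ℝ)*u^2) * ((M:ℝ)*u^4) := by ring
        _ ≤ (t:ℝ) * 1 := mul_le_mul hKt hM4 (by positivity) ht0
        _ = (t:ℝ) := mul_one _
    have hKKx : K ≤ Kx := by
      rw [hKdef, hKxdef]
      refine Nat.floor_le_floor ?_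
      exact mul_le_of_le_one_left (Real.rpow_nonneg hε0.le _) ht1
    have hNKM : ((N:ℝ) - (K:ℝ)*(M:ℝ)) * ε^2 ≤ 3*u^2 := by
      have e1 : (N:ℝ)*u^6 ≤ (t:ℝ) := by rw [← hε2]; exact hNle
      have e4 : (N:ℝ)*u^6 < (((K:ℝ)+1)*u^2) * (((M:ℝ)+1)*u^4) := by
        calc (N:ℝ)*u^6 ≤ (t:ℝ) := e1
          _ < ((K:ℝ)+1)*u^2 := hKlt
          _ = (((K:ℝ)+1)*u^2) * 1 := (mul_one _).symm
          _ ≤ (((K:ℝ)+1)*u^2)*(((M:ℝ)+1)*u^4) :=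
              mul_le_mul_of_nonneg_left hMgt.le (by positivity)
      have e5 : (K:ℝ)*u^6 ≤ u^4 := by
        have h := mul_le_mul_of_nonneg_right (hKt.trans ht1) (by positivity : (0:ℝ) ≤ u^4)
        calc (K:ℝ)*u^6 = (K:ℝ)*u^2*u^4 := by ring
          _ ≤ 1*u^4 := h
          _ = u^4 := one_mul _
      have e6 : (M:ℝ)*u^6 ≤ u^2 := by
        have h := mul_le_mul_of_nonneg_right hM4 (by positivity : (0:ℝ) ≤ u^2)
        calc (M:ℝ)*u^6 = (M:ℝ)*u^4*u^2 := by ring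
          _ ≤ 1*u^2 := h
          _ = u^2 := one_mul _
      have e7 : u^6 ≤ u^2 := by simpa using hup 6 2
      have e8 : u^4 ≤ u^2 := by simpa using hup 4 2
      have e4' : (N:ℝ)*u^6 < (K:ℝ)*(M:ℝ)*u^6 + (K:ℝ)*u^6 + (M:ℝ)*u^6 + u^6 := by
        have hh : (((K:ℝ)+1)*u^2) * (((M:ℝ)+1)*u^4)
            = (K:ℝ)*(M:ℝ)*u^6 + (K:ℝ)*u^6 + (M:ℝ)*u^6 + u^6 := by ring
        linarith only [e4, hh.le, hh.ge]
      rw [hε2]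
      linarith only [e4', e5, e6, e7, e8]
    have hMcard : ∀ n : ℕ, (n+1)*M - n*M = M := fun n => by
      rw [Nat.succ_mul, Nat.add_sub_cancel_left]
    have hxxj : ∀ n r : ℕ, r < M → |xx (n*M + r) - xx (n*M)|
        ≤ ε^2*((M:ℝ)*Ca) + ε*|birkhoff T v r (T^[n*M] z)| := by
      intro n r hr
      have h1 : xx (n*M + r) - xx (n*M)
          = ε^2 * ∑ i ∈ Finset.Ico (n*M) (n*M + r), a ε (xx i) (T^[i] z)
            + ε * birkhoff T v r (T^[n*M] z) := by
        have hss := slow_sub a v T ξ ε z (Nat.le_add_right (n*M) r)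
        rw [Nat.add_sub_cancel_left] at hss
        rw [hxx]
        exact hss
      rw [h1]
      have h2 : |ε^2 * ∑ i ∈ Finset.Ico (n*M) (n*M+r), a ε (xx i) (T^[i] z)|
          ≤ ε^2*((M:ℝ)*Ca) := by
        rw [abs_mul, abs_of_pos hε2pos]
        refine mul_le_mul_of_nonneg_left ?_ hε2pos.le
        calc |∑ i ∈ Finset.Ico (n*M) (n*M+r), a ε (xx i) (T^[i] z)|
            ≤ ∑ i ∈ Finset.Ico (n*M) (n*M+r), |a ε (xx i) (T^[i] z)| :=
              Finset.abs_sum_le_sum_abs _ _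
          _ ≤ (Finset.Ico (n*M) (n*M+r)).card • Ca :=
              Finset.sum_le_card_nsmul _ _ _ (fun i _ => hreg1' _ _)
          _ = (r:ℝ) * Ca := by rw [Nat.card_Ico, Nat.add_sub_cancel_left, nsmul_eq_mul]
          _ ≤ (M:ℝ) * Ca := mul_le_mul_of_nonneg_right (Nat.cast_le.mpr hr.le) hCa0
      have h3 : |ε * birkhoff T v r (T^[n*M] z)| = ε * |birkhoff T v r (T^[n*M] z)| := by
        rw [abs_mul, abs_of_pos hε0]
      calc |ε^2 * ∑ i ∈ Finset.Ico (n*M) (n*M+r), a ε (xx i) (T^[i] z)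
            + ε * birkhoff T v r (T^[n*M] z)|
          ≤ |ε^2 * ∑ i ∈ Finset.Ico (n*M) (n*M+r), a ε (xx i) (T^[i] z)|
            + |ε * birkhoff T v r (T^[n*M] z)| := abs_add_le _ _
        _ ≤ ε^2*((M:ℝ)*Ca) + ε*|birkhoff T v r (T^[n*M] z)| := add_le_add h2 (le_of_eq h3)
    have hblock : ∀ n : ℕ, ∑ j ∈ Finset.Ico (n*M) ((n+1)*M),
          |atil μ a (xx j) (T^[j] z) - atil μ a (xx (n*M)) (T^[j] z)|
        ≤ ∑ r ∈ Finset.range M,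
            (2*L*(ε^2*((M:ℝ)*Ca)) + 2*L*(ε*|birkhoff T v r (T^[n*M] z)|)) := by
      intro n
      rw [Finset.sum_Ico_eq_sum_range, hMcard n]
      refine Finset.sum_le_sum fun r hr => ?_
      have hrM := Finset.mem_range.mp hr
      calc |atil μ a (xx (n*M + r)) (T^[n*M + r] z) - atil μ a (xx (n*M)) (T^[n*M + r] z)|
          ≤ 2*L*|xx (n*M+r) - xx (n*M)| := hatil_lip _ _ _
        _ ≤ 2*L*(ε^2*((M:ℝ)*Ca) + ε*|birkhoff T v r (T^[n*M] z)|) :=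
            mul_le_mul_of_nonneg_left (hxxj n r hrM) (by positivity)
        _ = 2*L*(ε^2*((M:ℝ)*Ca)) + 2*L*(ε*|birkhoff T v r (T^[n*M] z)|) := by ring
    have hE4eq : ε^2 * (∑ j ∈ Finset.range N, atil μ a (xx j) (T^[j] z))
          - Deps μ a (fun _ => (1:ℝ)) v T ξ ε z (t:ℝ)
        = ε^2 * ∑ n ∈ Finset.range K, ∑ j ∈ Finset.Ico (n*M) ((n+1)*M),
            (atil μ a (xx j) (T^[j] z) - atil μ a (xx (n*M)) (T^[j] z))
          + ε^2 * ∑ j ∈ Finset.Ico (K*M) N, atil μ a (xx j) (T^[j] z) := by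
      rw [hDeq, sum_split hKMN (fun j => atil μ a (xx j) (T^[j] z)),
        sum_range_mul_blocks (fun j => atil μ a (xx j) (T^[j] z)) K M]
      simp only [Finset.sum_sub_distrib]
      ring
    have hE4 : |ε^2 * (∑ j ∈ Finset.range N, atil μ a (xx j) (T^[j] z))
          - Deps μ a (fun _ => (1:ℝ)) v T ξ ε z (t:ℝ)| ≤ 2*L*Ca*u + 6*Ca*u + G z := by
      rw [hE4eq]
      have hB : |ε^2 * ∑ j ∈ Finset.Ico (K*M) N, atil μ a (xx j) (T^[j] z)| ≤ 6*Ca*u := by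
        rw [abs_mul, abs_of_pos hε2pos]
        have h1 : |∑ j ∈ Finset.Ico (K*M) N, atil μ a (xx j) (T^[j] z)|
            ≤ ((N:ℝ) - (K:ℝ)*(M:ℝ)) * (2*Ca) := by
          calc |∑ j ∈ Finset.Ico (K*M) N, atil μ a (xx j) (T^[j] z)|
              ≤ ∑ j ∈ Finset.Ico (K*M) N, |atil μ a (xx j) (T^[j] z)| :=
                Finset.abs_sum_le_sum_abs _ _
            _ ≤ (Finset.Ico (K*M) N).card • (2*Ca) :=
                Finset.sum_le_card_nsmul _ _ _ (fun j _ => hatil_bd _ _)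
            _ = ((N - K*M : ℕ):ℝ) * (2*Ca) := by rw [Nat.card_Ico, nsmul_eq_mul]
            _ = ((N:ℝ) - (K:ℝ)*(M:ℝ)) * (2*Ca) := by
                rw [Nat.cast_sub hKMN]; push_cast; ring
        calc ε^2 * |∑ j ∈ Finset.Ico (K*M) N, atil μ a (xx j) (T^[j] z)|
            ≤ ε^2 * (((N:ℝ) - (K:ℝ)*(M:ℝ)) * (2*Ca)) :=
              mul_le_mul_of_nonneg_left h1 hε2pos.le
          _ = (((N:ℝ) - (K:ℝ)*(M:ℝ)) * ε^2) * (2*Ca) := by ring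
          _ ≤ (3*u^2) * (2*Ca) := mul_le_mul_of_nonneg_right hNKM (by positivity)
          _ = 6*Ca*u^2 := by ring
          _ ≤ 6*Ca*u := mul_le_mul_of_nonneg_left hu2u (by positivity)
      have hA : |ε^2 * ∑ n ∈ Finset.range K, ∑ j ∈ Finset.Ico (n*M) ((n+1)*M),
            (atil μ a (xx j) (T^[j] z) - atil μ a (xx (n*M)) (T^[j] z))|
          ≤ 2*L*Ca*u + G z := by
        rw [abs_mul, abs_of_pos hε2pos]
        have h1 : |∑ n ∈ Finset.range K, ∑ j ∈ Finset.Ico (n*M) ((n+1)*M),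
              (atil μ a (xx j) (T^[j] z) - atil μ a (xx (n*M)) (T^[j] z))|
            ≤ ∑ n ∈ Finset.range K, ∑ j ∈ Finset.Ico (n*M) ((n+1)*M),
              |atil μ a (xx j) (T^[j] z) - atil μ a (xx (n*M)) (T^[j] z)| :=
          (Finset.abs_sum_le_sum_abs _ _).trans
            (Finset.sum_le_sum fun n _ => Finset.abs_sum_le_sum_abs _ _)
        have h2 := Finset.sum_le_sum (s := Finset.range K) fun n _ => hblock n
        have h3 := mul_le_mul_of_nonneg_left (h1.trans h2) hε2pos.le
        refine h3.trans ?_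
        simp only [Finset.sum_add_distrib, Finset.sum_const, Finset.card_range,
          nsmul_eq_mul]
        have hc : ε^2 * ((K:ℝ)*((M:ℝ)*(2*L*(ε^2*((M:ℝ)*Ca))))) ≤ 2*L*Ca*u := by
          have p1 : ((K:ℝ)*u^2)*((M:ℝ)*u^4) ≤ 1 :=
            mul_le_one₀ (hKt.trans ht1) (by positivity) hM4
          have p2 : (((K:ℝ)*u^2)*((M:ℝ)*u^4))*((M:ℝ)*u^4) ≤ 1 :=
            mul_le_one₀ p1 (by positivity) hM4
          calc ε^2 * ((K:ℝ)*((M:ℝ)*(2*L*(ε^2*((M:ℝ)*Ca)))))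
              = 2*L*Ca*u^2 * ((((K:ℝ)*u^2)*((M:ℝ)*u^4))*((M:ℝ)*u^4)) := by rw [hε2]; ring
            _ ≤ 2*L*Ca*u^2 * 1 := mul_le_mul_of_nonneg_left p2 (by positivity)
            _ = 2*L*Ca*u^2 := mul_one _
            _ ≤ 2*L*Ca*u := mul_le_mul_of_nonneg_left hu2u (by positivity)
        have hd : ε^2 * (∑ n ∈ Finset.range K, ∑ r ∈ Finset.range M,
              2*L*(ε*|birkhoff T v r (T^[n*M] z)|)) ≤ G z := by
          have he : ε^2 * (∑ n ∈ Finset.range K, ∑ r ∈ Finset.range M,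
                2*L*(ε*|birkhoff T v r (T^[n*M] z)|))
              = ∑ n ∈ Finset.range K, ∑ r ∈ Finset.range M,
                2*L*ε^3*|birkhoff T v r (T^[n*M] z)| := by
            rw [Finset.mul_sum]
            refine Finset.sum_congr rfl fun n _ => ?_
            rw [Finset.mul_sum]
            refine Finset.sum_congr rfl fun r _ => ?_
            ring
          rw [he]
          have hsub : Finset.range K ×ˢ Finset.range M ⊆ P := by
            rw [hPdef]
            exact Finset.product_subset_product (Finset.range_subset_range.mpr hKKx) le_rfl
          calc ∑ n ∈ Finset.range K, ∑ r ∈ Finset.range M,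
                2*L*ε^3*|birkhoff T v r (T^[n*M] z)|
              = ∑ p ∈ Finset.range K ×ˢ Finset.range M, F p z := by
                rw [Finset.sum_product]
            _ ≤ ∑ p ∈ P, F p z :=
                Finset.sum_le_sum_of_subset_of_nonneg hsub (fun p _ _ => hFnn p z)
            _ = G z := by rw [hGdef]
        calc ε^2 * ((K:ℝ)*((M:ℝ)*(2*L*(ε^2*((M:ℝ)*Ca))))
              + ∑ n ∈ Finset.range K, ∑ r ∈ Finset.range M,
                2*L*(ε*|birkhoff T v r (T^[n*M] z)|))
            = ε^2 * ((K:ℝ)*((M:ℝ)*(2*L*(ε^2*((M:ℝ)*Ca)))))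
              + ε^2 * (∑ n ∈ Finset.range K, ∑ r ∈ Finset.range M,
                2*L*(ε*|birkhoff T v r (T^[n*M] z)|)) := by ring
          _ ≤ 2*L*Ca*u + G z := add_le_add hc hd
      calc |ε^2 * ∑ n ∈ Finset.range K, ∑ j ∈ Finset.Ico (n*M) ((n+1)*M),
            (atil μ a (xx j) (T^[j] z) - atil μ a (xx (n*M)) (T^[j] z))
          + ε^2 * ∑ j ∈ Finset.Ico (K*M) N, atil μ a (xx j) (T^[j] z)|
          ≤ |ε^2 * ∑ n ∈ Finset.range K, ∑ j ∈ Finset.Ico (n*M) ((n+1)*M),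
            (atil μ a (xx j) (T^[j] z) - atil μ a (xx (n*M)) (T^[j] z))|
            + |ε^2 * ∑ j ∈ Finset.Ico (K*M) N, atil μ a (xx j) (T^[j] z)| := abs_add_le _ _
        _ ≤ (2*L*Ca*u + G z) + 6*Ca*u := add_le_add hA hB
        _ = 2*L*Ca*u + 6*Ca*u + G z := by ring
    -- assembling
    have hsum : ∑ j ∈ Finset.range N, a ε (xx j) (T^[j] z)
        = ∑ j ∈ Finset.range N, (a ε (xx j) (T^[j] z) - a 0 (xx j) (T^[j] z))
          + ∑ j ∈ Finset.range N, abar μ a (xx j)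
          + ∑ j ∈ Finset.range N, atil μ a (xx j) (T^[j] z) := by
      rw [← Finset.sum_add_distrib, ← Finset.sum_add_distrib]
      refine Finset.sum_congr rfl fun j _ => ?_
      rw [atil]; ring
    have hdecomp : Xhat ε z t - ξ - (∫ s in (0:ℝ)..(t:ℝ), abar μ a (ev (Xhat ε z) s))
          - Weps ε z t - Deps μ a (fun _ => (1:ℝ)) v T ξ ε z (t:ℝ)
        = (ε^2 * ∑ j ∈ Finset.range N, (a ε (xx j) (T^[j] z) - a 0 (xx j) (T^[j] z)))
          + ((t:ℝ)/ε^2 - (N:ℝ)) * (ε^2 * a ε (xx N) (T^[N] z))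
          + (ε^2 * ∑ j ∈ Finset.range N, abar μ a (xx j)
              - ∫ s in (0:ℝ)..(t:ℝ), abar μ a (ev (Xhat ε z) s))
          + (ε^2 * (∑ j ∈ Finset.range N, atil μ a (xx j) (T^[j] z))
              - Deps μ a (fun _ => (1:ℝ)) v T ξ ε z (t:ℝ)) := by
      linear_combination hXW + ε^2 * hsum
    rw [hdecomp]
    refine le_trans (abs_add_le _ _) ?_
    refine le_trans (add_le_add (abs_add_le _ _) le_rfl) ?_
    refine le_trans (add_le_add (add_le_add (abs_add_le _ _) le_rfl) le_rfl) ?_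
    refine le_trans (add_le_add (add_le_add (add_le_add hE1 hE2) hE3) hE4) ?_
    rw [hc1def]
    exact le_of_eq (by ring)
  -- from the pointwise estimate to the `L^q` bound
  have hp1 : (1:ENNReal) ≤ ENNReal.ofReal q := by
    rw [← ENNReal.ofReal_one]; exact ENNReal.ofReal_le_ofReal hq
  have hp0 : ENNReal.ofReal q ≠ 0 := (lt_of_lt_of_le zero_lt_one hp1).ne'
  have hconst : eLpNorm (fun _ : Λ => c1 * u) (ENNReal.ofReal q) μ
      ≤ ENNReal.ofReal (c1 * u) := by
    rw [eLpNorm_const _ hp0 (IsProbabilityMeasure.ne_zero μ), measure_univ,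
      ENNReal.one_rpow, mul_one, ← ofReal_norm, Real.norm_eq_abs,
      abs_of_nonneg (by positivity)]
  have hrsq : ∀ r : ℕ, r < M → (r:ℝ) ^ ((1:ℝ)/2) * u^2 ≤ 1 := by
    intro r hr
    have hrM : (r:ℝ) ≤ (M:ℝ) := Nat.cast_le.mpr hr.le
    have h1 : (r:ℝ) * u^4 ≤ 1 :=
      le_trans (mul_le_mul_of_nonneg_right hrM (by positivity)) hM4
    have hs0 : 0 ≤ (r:ℝ) ^ ((1:ℝ)/2) := Real.rpow_nonneg (Nat.cast_nonneg r) _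
    have hs2 : ((r:ℝ) ^ ((1:ℝ)/2))^2 = (r:ℝ) := by
      rw [← Real.rpow_natCast ((r:ℝ) ^ ((1:ℝ)/2)) 2, ← Real.rpow_mul (Nat.cast_nonneg r)]
      norm_num
    have key1 : ((r:ℝ) ^ ((1:ℝ)/2) * u^2)^2 ≤ 1 := by
      have he : ((r:ℝ) ^ ((1:ℝ)/2) * u^2)^2 = ((r:ℝ) ^ ((1:ℝ)/2))^2 * u^4 := by ring
      rw [he, hs2]; exact h1
    exact (pow_le_one_iff_of_nonneg (mul_nonneg hs0 (sq_nonneg u)) two_ne_zero).mp key1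
  have hterm : ∀ p ∈ P, eLpNorm (F p) (ENNReal.ofReal q) μ
      ≤ ENNReal.ofReal (2*L*Cm'*u^7) := by
    intro p hp
    have hr : p.2 < M := (Finset.mem_product.mp hp).2 |> Finset.mem_range.mp
    have hFp : F p = (2*L*ε^3) • (fun z => ‖(birkhoff T v p.2 ∘ T^[p.1 * M]) z‖) := by
      funext z
      rw [hFdef]
      simp [Real.norm_eq_abs, Function.comp]
    rw [hFp, eLpNorm_const_smul, eLpNorm_norm,
      eLpNorm_comp_measurePreserving
        (birkhoff_measurable hT.measurable hvmeas p.2).aestronglyMeasurable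
        (hT.iterate _)]
    have hcnn : ‖2*L*ε^3‖ₑ = ENNReal.ofReal (2*L*ε^3) := by
      rw [← ofReal_norm, Real.norm_eq_abs, abs_of_nonneg (by positivity)]
    rw [hcnn]
    rcases Nat.eq_zero_or_pos p.2 with h0 | hpos
    · have hb0 : birkhoff T v p.2 = fun _ => 0 := by
        funext z; rw [h0, birkhoff]; simp
      rw [hb0]
      simp
    · refine le_trans (mul_le_mul_right (h52' p.2 hpos) _) ?_
      rw [← ENNReal.ofReal_mul (by positivity)]
      refine ENNReal.ofReal_le_ofReal ?_
      have h1 := hrsq p.2 hr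
      have h2 : (0:ℝ) ≤ (p.2:ℝ) ^ ((1:ℝ)/2) := Real.rpow_nonneg (Nat.cast_nonneg _) _
      have h3 : ε^3 = u^9 := by rw [← hu3]; ring
      rw [h3]
      calc 2*L*u^9 * (Cm' * (p.2:ℝ)^((1:ℝ)/2))
          = 2*L*Cm'*u^7 * ((p.2:ℝ)^((1:ℝ)/2) * u^2) := by ring
        _ ≤ 2*L*Cm'*u^7 * 1 := mul_le_mul_of_nonneg_left h1 (by positivity)
        _ = 2*L*Cm'*u^7 := mul_one _
  have hGbound : eLpNorm G (ENNReal.ofReal q) μ ≤ ENNReal.ofReal (2*L*Cm'*u) := by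
    have hGfun : G = ∑ p ∈ P, F p := by
      funext z
      rw [hGdef, Finset.sum_apply]
    calc eLpNorm G (ENNReal.ofReal q) μ = eLpNorm (∑ p ∈ P, F p) (ENNReal.ofReal q) μ := by
          rw [hGfun]
      _ ≤ ∑ p ∈ P, eLpNorm (F p) (ENNReal.ofReal q) μ :=
          eLpNorm_sum_le (fun p _ => (hFmeas p).aestronglyMeasurable) hp1
      _ ≤ ∑ _p ∈ P, ENNReal.ofReal (2*L*Cm'*u^7) := Finset.sum_le_sum hterm
      _ = (P.card : ENNReal) * ENNReal.ofReal (2*L*Cm'*u^7) := by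
          rw [Finset.sum_const, nsmul_eq_mul]
      _ ≤ ENNReal.ofReal (2*L*Cm'*u) := by
          rw [hPdef, Finset.card_product, Finset.card_range, Finset.card_range,
            ← ENNReal.ofReal_natCast, ← ENNReal.ofReal_mul (Nat.cast_nonneg _)]
          refine ENNReal.ofReal_le_ofReal ?_
          push_cast
          have h66 : (Kx:ℝ) * (M:ℝ) * u^6 ≤ 1 := by
            have h := mul_le_mul hKx2 hM4 (by positivity) (by positivity : (0:ℝ) ≤ 1)
            calc (Kx:ℝ) * (M:ℝ) * u^6 = ((Kx:ℝ) * u^2) * ((M:ℝ) * u^4) := by ring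
              _ ≤ 1 * 1 := h
              _ = 1 := by norm_num
          calc (Kx:ℝ) * (M:ℝ) * (2*L*Cm'*u^7) = 2*L*Cm'*u * ((Kx:ℝ)*(M:ℝ)*u^6) := by ring
            _ ≤ 2*L*Cm'*u * 1 := mul_le_mul_of_nonneg_left h66 (by positivity)
            _ = 2*L*Cm'*u := mul_one _
  calc eLpNorm (fun y => ⨆ t : Set.Icc (0:ℝ) 1,
          |Xhat ε y t - ξ - (∫ s in (0:ℝ)..(t:ℝ), abar μ a (ev (Xhat ε y) s))
            - Weps ε y t - Deps μ a (fun _ => (1:ℝ)) v T ξ ε y (t:ℝ)|) (ENNReal.ofReal q) μ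
      ≤ eLpNorm (fun z => c1 * u + G z) (ENNReal.ofReal q) μ := by
        apply eLpNorm_mono_real
        intro z
        rw [Real.norm_eq_abs, abs_of_nonneg (Real.iSup_nonneg fun t => abs_nonneg _)]
        exact ciSup_le (key z)
    _ ≤ eLpNorm (fun _ : Λ => c1 * u) (ENNReal.ofReal q) μ
        + eLpNorm G (ENNReal.ofReal q) μ := by
        have hfg : (fun z => c1 * u + G z) = (fun _ : Λ => c1 * u) + G := rfl
        rw [hfg]
        exact eLpNorm_add_le aestronglyMeasurable_const hGmeas.aestronglyMeasurable hp1
    _ ≤ ENNReal.ofReal (c1 * u) + ENNReal.ofReal (2*L*Cm'*u) := add_le_add hconst hGbound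
    _ ≤ ENNReal.ofReal ((c1 + 2*L*Cm' + 1) * u) := by
        rw [← ENNReal.ofReal_add (by positivity) (by positivity)]
        refine ENNReal.ofReal_le_ofReal ?_
        nlinarith
end
end

section
/- Let T : Λ → Λ be an ergodic measure-preserving transformation of a probability space (Λ, μ), v ∈ L^∞(Λ), and suppose b ≡ 1. Assume a_ε satisfies the regularity conditions, the moment conditions (5.1) and (5.2) hold with exponent q ≥ 1, and σ² > 0. Then there is a constant C > 0 such that for all ε ∈ (0, 1/2): ‖1_{B_ε} sup_{t∈[0,1]} |D_ε(t)|‖_{L^q(μ)} ≤ C ε^{1/3} (−log ε)^{1/4}, where B_ε = {sup_{t∈[0,1]} |x̂_ε(t)| ≤ Q_ε} and Q_ε = (−32 σ² log ε)^{1/2}. -/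
open MeasureTheory ProbabilityTheory Filter Topology

noncomputable section

set_option maxHeartbeats 1000000 in
/-- **Lemma 5.7 (estimate on `D_ε`, case `b ≡ 1`).**
With `B_ε = {sup_{[0,1]} |x̂_ε| ≤ Q_ε}` and `Q_ε = (−32 σ² log ε)^{1/2}`,
`‖1_{B_ε} sup_{[0,1]} |D_ε|‖_{L^q(μ)} ≤ C ε^{1/3} (−log ε)^{1/4}`. -/
theorem Deps_estimate
    {Λ : Type} [MeasurableSpace Λ] (μ : Measure Λ) [IsProbabilityMeasure μ]
    (T : Λ → Λ) (hT : MeasurePreserving T μ μ) (hTerg : Ergodic T μ)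
    -- `v ∈ L^∞(Λ)`
    (v : Λ → ℝ) (hvmeas : Measurable v) (Kv : ℝ) (hvbd : ∀ y, |v y| ≤ Kv)
    -- the family `a_ε` and the regularity conditions (i)-(iii)
    (a : ℝ → ℝ → Λ → ℝ) (hameas : ∀ ε x, Measurable (a ε x))
    (Ca : ℝ) (hreg1 : ∀ ε ∈ Set.Icc (0:ℝ) 1, ∀ (x : ℝ) (y : Λ), |a ε x y| ≤ Ca)
    (Creg : ℝ) (hreg2 : ∀ ε ∈ Set.Ioo (0:ℝ) 1, ∀ (x : ℝ) (y : Λ),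
      |a ε x y - a 0 x y| ≤ Creg * ε ^ ((1:ℝ)/3))
    (L : ℝ) (hL : 0 ≤ L)
    (hreg3 : ∀ (x x' : ℝ) (y : Λ), |a 0 x y - a 0 x' y| ≤ L * |x - x'|)
    (ξ : ℝ)
    -- `x̂_ε(t) = x_ε(t ε⁻²)`, linearly interpolated, as a random element of `C[0,1]`
    (Xhat : ℝ → Λ → C01)
    (hXhat : ∀ ε ∈ Set.Ioo (0:ℝ) 1, ∀ (y : Λ) (t : Set.Icc (0:ℝ) 1),
      Xhat ε y t = slow a (fun _ => (1:ℝ)) v T ξ ε y ⌊(t:ℝ)/ε^2⌋₊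
        + ((t:ℝ)/ε^2 - (⌊(t:ℝ)/ε^2⌋₊ : ℝ)) *
          (slow a (fun _ => (1:ℝ)) v T ξ ε y (⌊(t:ℝ)/ε^2⌋₊ + 1) - slow a (fun _ => (1:ℝ)) v T ξ ε y ⌊(t:ℝ)/ε^2⌋₊))
    (q : ℝ) (hq : 1 ≤ q) (Cm : ℝ)
    -- moment condition (5.1)
    (h51 : ∀ (u : ℝ) (n : ℕ), 1 ≤ n →
      eLpNorm (fun y => ∑ j ∈ Finset.range n, atil μ a u (T^[j] y)) (ENNReal.ofReal q) μ
        ≤ ENNReal.ofReal (Cm * (n:ℝ) ^ ((1:ℝ)/2)))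
    -- moment condition (5.2)
    (h52 : ∀ n : ℕ, 1 ≤ n →
      eLpNorm (birkhoff T v n) (ENNReal.ofReal q) μ
        ≤ ENNReal.ofReal (Cm * (n:ℝ) ^ ((1:ℝ)/2)))
    (σ2 : ℝ)
    (hσ2 : Tendsto (fun n : ℕ => (n:ℝ)⁻¹ * ∫ y, (birkhoff T v n y)^2 ∂μ) atTop (𝓝 σ2))
    (hσ2pos : 0 < σ2) :
    ∃ C : ℝ, 0 < C ∧ ∀ ε ∈ Set.Ioo (0:ℝ) (1/2:ℝ),
      eLpNorm (Set.indicator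
          {y : Λ | (⨆ t : Set.Icc (0:ℝ) 1, |Xhat ε y t|)
              ≤ (-32 * σ2 * Real.log ε) ^ ((1:ℝ)/2)}
          (fun y => ⨆ t : Set.Icc (0:ℝ) 1,
            |Deps μ a (fun _ => (1:ℝ)) v T ξ ε y (t:ℝ)|))
        (ENNReal.ofReal q) μ
      ≤ ENNReal.ofReal (C * ε ^ ((1:ℝ)/3) * (-Real.log ε) ^ ((1:ℝ)/4)) := by
  classical
  set p := ENNReal.ofReal q with hp_def
  have hp1 : 1 ≤ p := by
    rw [hp_def]
    exact ENNReal.one_le_ofReal.mpr hq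
  have hp0 : p ≠ 0 := by
    rw [hp_def]
    simp only [ne_eq, ENNReal.ofReal_eq_zero, not_le]
    linarith
  set Cm' := max Cm 0 with hCm'_def
  have hCm'0 : (0:ℝ) ≤ Cm' := le_max_right _ _
  -- integrability and Lipschitz property of `atil`
  have hInt : ∀ x : ℝ, Integrable (a 0 x) μ := by
    intro x
    refine (integrable_const Ca).mono' (hameas 0 x).aestronglyMeasurable ?_
    exact Filter.Eventually.of_forall fun y => by
      simpa [Real.norm_eq_abs] using hreg1 0 ⟨le_refl 0, by norm_num⟩ x y
  have hatil_lip : ∀ (x x' : ℝ) (y : Λ),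
      |atil μ a x y - atil μ a x' y| ≤ 2 * L * |x - x'| := by
    intro x x' y
    have habar : |abar μ a x - abar μ a x'| ≤ L * |x - x'| := by
      rw [abar, abar, ← integral_sub (hInt x) (hInt x')]
      calc |∫ y, (a 0 x y - a 0 x' y) ∂μ| ≤ ∫ y, |a 0 x y - a 0 x' y| ∂μ := by
            simpa [Real.norm_eq_abs] using
              norm_integral_le_integral_norm (fun y => a 0 x y - a 0 x' y) (μ := μ)
        _ ≤ ∫ _, L * |x - x'| ∂μ := by
            refine integral_mono ((hInt x).sub (hInt x')).abs (integrable_const _) ?_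
            intro y; exact hreg3 x x' y
        _ = L * |x - x'| := by simp
    have h3 := hreg3 x x' y
    have hre : atil μ a x y - atil μ a x' y
        = (a 0 x y - a 0 x' y) - (abar μ a x - abar μ a x') := by
      simp only [atil]; ring
    rw [hre]
    calc |(a 0 x y - a 0 x' y) - (abar μ a x - abar μ a x')|
        ≤ |a 0 x y - a 0 x' y| + |abar μ a x - abar μ a x'| := abs_sub _ _
      _ ≤ L * |x - x'| + L * |x - x'| := add_le_add h3 habar
      _ = 2 * L * |x - x'| := by ring
  -- the constant
  have hσ32 : (0:ℝ) < 32 * σ2 := by linarith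
  have hc4 : (0:ℝ) ≤ (32*σ2) ^ ((1:ℝ)/4) := Real.rpow_nonneg hσ32.le _
  have hlog2pos : (0:ℝ) < Real.log 2 := Real.log_pos (by norm_num)
  have hlg24 : (0:ℝ) < (Real.log 2) ^ ((1:ℝ)/4) := Real.rpow_pos_of_pos hlog2pos _
  refine ⟨2*L*(32*σ2)^((1:ℝ)/4) + 2*Cm'*(32*σ2)^((1:ℝ)/4)
      + 2*Cm'/(Real.log 2)^((1:ℝ)/4) + 1, ?_, ?_⟩
  · have h1 : 0 ≤ 2*L*(32*σ2)^((1:ℝ)/4) := by positivity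
    have h2 : 0 ≤ 2*Cm'*(32*σ2)^((1:ℝ)/4) := by positivity
    have h3 : 0 ≤ 2*Cm'/(Real.log 2)^((1:ℝ)/4) := by positivity
    linarith
  intro ε hε
  obtain ⟨hε0, hε12⟩ := hε
  have hε1 : ε < 1 := by linarith
  have hεle1 : ε ≤ 1 := hε1.le
  have hε2pos : (0:ℝ) < ε^2 := by positivity
  have hlogε : Real.log ε < 0 := Real.log_neg hε0 hε1
  have hLgpos : (0:ℝ) < -Real.log ε := by linarith
  have hlog2le : Real.log 2 ≤ -Real.log ε := by
    have h2 : (2:ℝ) ≤ ε⁻¹ := by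
      rw [inv_eq_one_div, le_div_iff₀ hε0]; linarith
    calc Real.log 2 ≤ Real.log ε⁻¹ := Real.log_le_log (by norm_num) h2
      _ = -Real.log ε := Real.log_inv ε
  have hXpos : (0:ℝ) < -32 * σ2 * Real.log ε := by
    have hre : -32 * σ2 * Real.log ε = (32 * σ2) * (-Real.log ε) := by ring
    rw [hre]
    exact mul_pos hσ32 hLgpos
  set Q := (-32 * σ2 * Real.log ε) ^ ((1:ℝ)/2) with hQdef
  have hQpos : 0 < Q := Real.rpow_pos_of_pos hXpos _
  set δ := Q ^ ((1:ℝ)/2) * ε ^ ((1:ℝ)/3) with hδdef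
  have hδpos : 0 < δ := by
    apply mul_pos (Real.rpow_pos_of_pos hQpos _) (Real.rpow_pos_of_pos hε0 _)
  set M := ⌊ε ^ (-((4:ℝ)/3))⌋₊ with hMdef
  set N := ⌊ε ^ (-((2:ℝ)/3))⌋₊ with hNdef
  set P := ⌈2*Q/δ⌉₊ + 1 with hPdef
  have hMreal : (M:ℝ) ≤ ε ^ (-((4:ℝ)/3)) := Nat.floor_le (Real.rpow_nonneg hε0.le _)
  have hNreal : (N:ℝ) ≤ ε ^ (-((2:ℝ)/3)) := Nat.floor_le (Real.rpow_nonneg hε0.le _)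
  have hM1 : 1 ≤ M := by
    rw [hMdef]
    apply Nat.le_floor
    exact_mod_cast Real.one_le_rpow_of_pos_of_le_one_of_nonpos hε0 hεle1 (by norm_num)
  have hrpow_nat2 : ε ^ ((2:ℝ)) = ε ^ 2 := by
    rw [show ((2:ℝ)) = ((2:ℕ):ℝ) by norm_num, Real.rpow_natCast]
  have hid1 : ε ^ (-((2:ℝ)/3)) * ε ^ (-((4:ℝ)/3)) * ε^2 = 1 := by
    rw [← hrpow_nat2, ← Real.rpow_add hε0, ← Real.rpow_add hε0]
    norm_num
  have hNMε2 : (N:ℝ) * M * ε^2 ≤ 1 := by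
    calc (N:ℝ) * M * ε^2
        ≤ ε ^ (-((2:ℝ)/3)) * ε ^ (-((4:ℝ)/3)) * ε^2 := by
          have h1 : (N:ℝ) * M ≤ ε ^ (-((2:ℝ)/3)) * ε ^ (-((4:ℝ)/3)) :=
            mul_le_mul hNreal hMreal (Nat.cast_nonneg M) (Real.rpow_nonneg hε0.le _)
          exact mul_le_mul_of_nonneg_right h1 hε2pos.le
      _ = 1 := hid1
  have hε2eq : ε ^ ((2:ℝ)/3) * ε ^ ((4:ℝ)/3) = ε^2 := by
    rw [← Real.rpow_add hε0, ← hrpow_nat2]; norm_num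
  have hMhalf : (M:ℝ) ^ ((1:ℝ)/2) ≤ ε ^ (-((2:ℝ)/3)) := by
    calc (M:ℝ) ^ ((1:ℝ)/2) ≤ (ε ^ (-((4:ℝ)/3))) ^ ((1:ℝ)/2) :=
          Real.rpow_le_rpow (Nat.cast_nonneg M) hMreal (by norm_num)
      _ = ε ^ (-((2:ℝ)/3)) := by
          rw [← Real.rpow_mul hε0.le]; norm_num
  -- the grid
  have hgrid : ∀ x : ℝ, |x| ≤ Q → ∃ k, k < P ∧ |x - (-Q + (k:ℝ)*δ)| ≤ δ := by
    intro x hx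
    obtain ⟨hx1, hx2⟩ := abs_le.mp hx
    have hx0 : 0 ≤ x + Q := by linarith
    refine ⟨⌊(x+Q)/δ⌋₊, ?_, ?_⟩
    · have h1 : ⌊(x+Q)/δ⌋₊ ≤ ⌊2*Q/δ⌋₊ := by
        apply Nat.floor_mono
        gcongr
        linarith
      calc ⌊(x+Q)/δ⌋₊ ≤ ⌊2*Q/δ⌋₊ := h1
        _ ≤ ⌈2*Q/δ⌉₊ := Nat.floor_le_ceil _
        _ < P := Nat.lt_succ_self _
    · have hfl : (⌊(x+Q)/δ⌋₊ : ℝ) * δ ≤ x + Q :=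
        (le_div_iff₀ hδpos).mp (Nat.floor_le (div_nonneg hx0 hδpos.le))
      have hfu : x + Q < ((⌊(x+Q)/δ⌋₊ : ℝ) + 1) * δ :=
        (div_lt_iff₀ hδpos).mp (Nat.lt_floor_add_one _)
      rw [abs_le]
      have hexp : ((⌊(x+Q)/δ⌋₊:ℝ) + 1) * δ = (⌊(x+Q)/δ⌋₊:ℝ) * δ + δ := by ring
      constructor
      · linarith [hδpos.le]
      · linarith
  have hPreal : (P:ℝ) ≤ 2*Q/δ + 2 := by
    have h := Nat.ceil_lt_add_one (by positivity : (0:ℝ) ≤ 2*Q/δ)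
    rw [hPdef]
    push_cast
    linarith
  -- block sums at grid points
  set S := fun (n k : ℕ) (y : Λ) =>
    ∑ j ∈ Finset.Ico (n*M) ((n+1)*M), atil μ a (-Q + (k:ℝ)*δ) (T^[j] y) with hSdef
  have hSmeas : ∀ n k, Measurable (S n k) := by
    intro n k
    apply Finset.measurable_sum
    intro j _
    exact ((hameas 0 _).sub measurable_const).comp (hT.measurable.iterate j)
  have hSnorm : ∀ n k, eLpNorm (S n k) p μ
      ≤ ENNReal.ofReal (Cm' * (M:ℝ)^((1:ℝ)/2)) := by
    intro n k
    have hre : S n k = (fun y => ∑ j ∈ Finset.range M,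
        atil μ a (-Q + (k:ℝ)*δ) (T^[j] y)) ∘ (T^[n*M]) := by
      funext y
      simp only [hSdef, Function.comp]
      rw [Finset.sum_Ico_eq_sum_range]
      have hc : (n+1)*M - n*M = M := by
        rw [add_mul, one_mul, Nat.add_sub_cancel_left]
      rw [hc]
      apply Finset.sum_congr rfl
      intro j _
      rw [add_comm (n*M) j, Function.iterate_add_apply]
    rw [hre, eLpNorm_comp_measurePreserving ?_ (hT.iterate (n*M))]
    · refine le_trans (h51 _ M hM1) (ENNReal.ofReal_le_ofReal ?_)
      exact mul_le_mul_of_nonneg_right (le_max_left _ _)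
        (Real.rpow_nonneg (Nat.cast_nonneg M) _)
    · apply Measurable.aestronglyMeasurable
      apply Finset.measurable_sum
      intro j _
      exact ((hameas 0 _).sub measurable_const).comp (hT.measurable.iterate j)
  set g := fun y => ∑ n ∈ Finset.range N, ∑ k ∈ Finset.range P, ε^2 * |S n k y|
    with hgdef
  have hgnonneg : ∀ y, 0 ≤ g y := by
    intro y
    apply Finset.sum_nonneg
    intro n _
    apply Finset.sum_nonneg
    intro k _
    positivity
  have hgmeas : Measurable g := by
    apply Finset.measurable_sum
    intro n _
    apply Finset.measurable_sum
    intro k _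
    exact measurable_const.mul (hSmeas n k).abs
  haveI : Nonempty (Set.Icc (0:ℝ) 1) := ⟨⟨0, by norm_num, by norm_num⟩⟩
  -- pointwise bound on the indicator set
  have hpoint : ∀ y : Λ, (⨆ t : Set.Icc (0:ℝ) 1, |Xhat ε y t|) ≤ Q →
      ∀ t : Set.Icc (0:ℝ) 1,
        |Deps μ a (fun _ => (1:ℝ)) v T ξ ε y (t:ℝ)| ≤ 2*L*δ + g y := by
    intro y hy t
    have hxbd : ∀ n, n < N → |slow a (fun _ => (1:ℝ)) v T ξ ε y (n*M)| ≤ Q := by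
      intro n hn
      have htle : ((n*M : ℕ):ℝ) * ε^2 ≤ 1 := by
        push_cast
        have h1 : (n:ℝ) * M ≤ (N:ℝ) * M := by
          have : (n:ℝ) ≤ (N:ℝ) := by exact_mod_cast hn.le
          exact mul_le_mul_of_nonneg_right this (Nat.cast_nonneg M)
        calc (n:ℝ) * M * ε^2 ≤ (N:ℝ) * M * ε^2 := mul_le_mul_of_nonneg_right h1 hε2pos.le
          _ ≤ 1 := hNMε2
      have htr0 : (0:ℝ) ≤ ((n*M : ℕ):ℝ) * ε^2 := by positivity
      have heval := hXhat ε ⟨hε0, hε1⟩ y ⟨((n*M : ℕ):ℝ) * ε^2, htr0, htle⟩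
      have hdiv : ((n*M : ℕ):ℝ) * ε^2 / ε^2 = ((n*M:ℕ):ℝ) := by
        field_simp
      rw [hdiv, Nat.floor_natCast, sub_self, zero_mul, add_zero] at heval
      rw [← heval]
      have hbdd : BddAbove (Set.range fun t : Set.Icc (0:ℝ) 1 => |Xhat ε y t|) :=
        (isCompact_range ((Xhat ε y).continuous.abs)).bddAbove
      exact le_trans (le_ciSup hbdd ⟨((n*M : ℕ):ℝ) * ε^2, htr0, htle⟩) hy
    have hJ : ∀ n, n < N → |Jeps μ a (fun _ => (1:ℝ)) v T ξ ε y n|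
        ≤ ε^((4:ℝ)/3) * (2*L*δ*M + ∑ k ∈ Finset.range P, |S n k y|) := by
      intro n hn
      obtain ⟨k, hkP, hku⟩ := hgrid _ (hxbd n hn)
      have hJeq : Jeps μ a (fun _ => (1:ℝ)) v T ξ ε y n
          = ε^((4:ℝ)/3) * ∑ j ∈ Finset.Ico (n*M) ((n+1)*M),
              atil μ a (slow a (fun _ => (1:ℝ)) v T ξ ε y (n*M)) (T^[j] y) := by
        simp only [Jeps, ← hMdef]
      rw [hJeq, abs_mul, abs_of_nonneg (Real.rpow_nonneg hε0.le ((4:ℝ)/3))]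
      apply mul_le_mul_of_nonneg_left _ (Real.rpow_nonneg hε0.le _)
      set xv := slow a (fun _ => (1:ℝ)) v T ξ ε y (n*M) with hxv
      have hsplit : ∑ j ∈ Finset.Ico (n*M) ((n+1)*M), atil μ a xv (T^[j] y)
          = (∑ j ∈ Finset.Ico (n*M) ((n+1)*M),
              (atil μ a xv (T^[j] y) - atil μ a (-Q + (k:ℝ)*δ) (T^[j] y)))
            + S n k y := by
        rw [hSdef, ← Finset.sum_add_distrib]
        apply Finset.sum_congr rfl
        intro j _
        ring
      rw [hsplit]
      calc |(∑ j ∈ Finset.Ico (n*M) ((n+1)*M),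
              (atil μ a xv (T^[j] y) - atil μ a (-Q + (k:ℝ)*δ) (T^[j] y))) + S n k y|
          ≤ |∑ j ∈ Finset.Ico (n*M) ((n+1)*M),
              (atil μ a xv (T^[j] y) - atil μ a (-Q + (k:ℝ)*δ) (T^[j] y))| + |S n k y| :=
            abs_add_le _ _
        _ ≤ (∑ j ∈ Finset.Ico (n*M) ((n+1)*M), 2*L*δ) + |S n k y| := by
            apply add_le_add_left
            refine le_trans (Finset.abs_sum_le_sum_abs _ _) ?_
            apply Finset.sum_le_sum
            intro j _
            refine le_trans (hatil_lip _ _ _) ?_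
            exact mul_le_mul_of_nonneg_left hku (by linarith : (0:ℝ) ≤ 2*L)
        _ ≤ 2*L*δ*M + ∑ k' ∈ Finset.range P, |S n k' y| := by
            apply add_le_add
            · rw [Finset.sum_const, Nat.card_Ico]
              have hc : (n+1)*M - n*M = M := by
                rw [add_mul, one_mul, Nat.add_sub_cancel_left]
              rw [hc, nsmul_eq_mul]
              apply le_of_eq
              ring
            · exact Finset.single_le_sum (fun k' _ => abs_nonneg (S n k' y))
                (Finset.mem_range.mpr hkP)
    have hNt : ⌊(t:ℝ) * ε ^ (-((2:ℝ)/3))⌋₊ ≤ N := by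
      rw [hNdef]
      exact Nat.floor_mono (mul_le_of_le_one_left (Real.rpow_nonneg hε0.le _) t.2.2)
    have hDeq : Deps μ a (fun _ => (1:ℝ)) v T ξ ε y (t:ℝ)
        = ε^((2:ℝ)/3) * ∑ n ∈ Finset.range ⌊(t:ℝ) * ε ^ (-((2:ℝ)/3))⌋₊,
            Jeps μ a (fun _ => (1:ℝ)) v T ξ ε y n := by
      simp only [Deps]
    rw [hDeq, abs_mul, abs_of_nonneg (Real.rpow_nonneg hε0.le ((2:ℝ)/3))]
    calc ε^((2:ℝ)/3) * |∑ n ∈ Finset.range ⌊(t:ℝ) * ε ^ (-((2:ℝ)/3))⌋₊,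
            Jeps μ a (fun _ => (1:ℝ)) v T ξ ε y n|
        ≤ ε^((2:ℝ)/3) * ∑ n ∈ Finset.range N,
            |Jeps μ a (fun _ => (1:ℝ)) v T ξ ε y n| := by
          apply mul_le_mul_of_nonneg_left _ (Real.rpow_nonneg hε0.le _)
          refine le_trans (Finset.abs_sum_le_sum_abs _ _) ?_
          exact Finset.sum_le_sum_of_subset_of_nonneg
            (Finset.range_subset_range.mpr hNt) (fun i _ _ => abs_nonneg _)
      _ ≤ ε^((2:ℝ)/3) * ∑ n ∈ Finset.range N,
            ε^((4:ℝ)/3) * (2*L*δ*M + ∑ k ∈ Finset.range P, |S n k y|) := by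
          apply mul_le_mul_of_nonneg_left _ (Real.rpow_nonneg hε0.le _)
          exact Finset.sum_le_sum (fun n hn => hJ n (Finset.mem_range.mp hn))
      _ = ∑ n ∈ Finset.range N,
            (ε^2 * (2*L*δ*M) + ∑ k ∈ Finset.range P, ε^2 * |S n k y|) := by
          rw [Finset.mul_sum]
          apply Finset.sum_congr rfl
          intro n _
          rw [← mul_assoc, hε2eq, mul_add, Finset.mul_sum]
      _ = (N:ℝ) * (ε^2 * (2*L*δ*M)) + g y := by
          rw [Finset.sum_add_distrib, Finset.sum_const, Finset.card_range,
            nsmul_eq_mul, hgdef]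
      _ ≤ 2*L*δ + g y := by
          have h1 : (N:ℝ) * (ε^2 * (2*L*δ*M)) = (2*L*δ) * ((N:ℝ)*M*ε^2) := by ring
          have h2 : (2*L*δ) * ((N:ℝ)*M*ε^2) ≤ (2*L*δ) * 1 :=
            mul_le_mul_of_nonneg_left hNMε2 (by positivity)
          rw [h1]
          linarith
  -- reduce the eLpNorm of the indicator to the pointwise bound
  have hmono : eLpNorm (Set.indicator
        {y : Λ | (⨆ t : Set.Icc (0:ℝ) 1, |Xhat ε y t|) ≤ Q}
        (fun y => ⨆ t : Set.Icc (0:ℝ) 1,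
          |Deps μ a (fun _ => (1:ℝ)) v T ξ ε y (t:ℝ)|)) p μ
      ≤ eLpNorm (fun y => 2*L*δ + g y) p μ := by
    apply eLpNorm_mono_real
    intro y
    rw [Real.norm_eq_abs]
    by_cases hy : y ∈ {y : Λ | (⨆ t : Set.Icc (0:ℝ) 1, |Xhat ε y t|) ≤ Q}
    · rw [Set.indicator_of_mem hy]
      have hb := hpoint y hy
      have hbdd : BddAbove (Set.range fun t : Set.Icc (0:ℝ) 1 =>
          |Deps μ a (fun _ => (1:ℝ)) v T ξ ε y (t:ℝ)|) := by
        refine ⟨2*L*δ + g y, ?_⟩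
        rintro r ⟨t, rfl⟩
        exact hb t
      have hsup_le : (⨆ t : Set.Icc (0:ℝ) 1,
          |Deps μ a (fun _ => (1:ℝ)) v T ξ ε y (t:ℝ)|) ≤ 2*L*δ + g y := ciSup_le hb
      have hsup_nonneg : 0 ≤ ⨆ t : Set.Icc (0:ℝ) 1,
          |Deps μ a (fun _ => (1:ℝ)) v T ξ ε y (t:ℝ)| :=
        le_trans (abs_nonneg _) (le_ciSup hbdd ⟨0, by norm_num, by norm_num⟩)
      rw [abs_of_nonneg hsup_nonneg]
      exact hsup_le
    · rw [Set.indicator_of_notMem hy, abs_zero]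
      have h1 : (0:ℝ) ≤ 2*L*δ := mul_nonneg (by linarith) hδpos.le
      linarith [hgnonneg y]
  -- split off the constant and estimate g
  have hconst : eLpNorm (fun _ : Λ => 2*L*δ) p μ = ENNReal.ofReal (2*L*δ) := by
    rw [eLpNorm_const _ hp0 (IsProbabilityMeasure.ne_zero μ)]
    rw [measure_univ, ENNReal.one_rpow, mul_one,
      Real.enorm_eq_ofReal (mul_nonneg (mul_nonneg (by norm_num) hL) hδpos.le)]
  have hsplit : eLpNorm (fun y => 2*L*δ + g y) p μ
      ≤ ENNReal.ofReal (2*L*δ) + eLpNorm g p μ := by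
    have h1 : (fun y => 2*L*δ + g y) = (fun _ : Λ => 2*L*δ) + g := rfl
    rw [h1]
    refine le_trans (eLpNorm_add_le aestronglyMeasurable_const
      hgmeas.aestronglyMeasurable hp1) ?_
    rw [hconst]
  have hterm : ∀ n k, eLpNorm (fun y => ε^2 * |S n k y|) p μ
      ≤ ENNReal.ofReal (ε^2 * (Cm' * (M:ℝ)^((1:ℝ)/2))) := by
    intro n k
    have h1 : (fun y => ε^2 * |S n k y|) = (ε^2) • (fun y => |S n k y|) := by
      funext y
      simp [smul_eq_mul]
    rw [h1, eLpNorm_const_smul]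
    have h2 : eLpNorm (fun y => |S n k y|) p μ = eLpNorm (S n k) p μ := by
      rw [← eLpNorm_norm (S n k)]
      simp only [Real.norm_eq_abs]
    rw [h2, ENNReal.ofReal_mul (sq_nonneg ε)]
    exact mul_le_mul' (le_of_eq (Real.enorm_eq_ofReal (sq_nonneg ε))) (hSnorm n k)
  have hgbound : eLpNorm g p μ
      ≤ ENNReal.ofReal ((N:ℝ) * P * (ε^2 * (Cm' * (M:ℝ)^((1:ℝ)/2)))) := by
    have hg' : g = ∑ nk ∈ Finset.range N ×ˢ Finset.range P,
        (fun y => ε^2 * |S nk.1 nk.2 y|) := by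
      funext y
      rw [hgdef]
      simp only [Finset.sum_apply]
      rw [Finset.sum_product]
    rw [hg']
    refine le_trans (eLpNorm_sum_le
      (fun nk _ => (measurable_const.mul (hSmeas nk.1 nk.2).abs).aestronglyMeasurable)
      hp1) ?_
    calc ∑ nk ∈ Finset.range N ×ˢ Finset.range P,
          eLpNorm (fun y => ε^2 * |S nk.1 nk.2 y|) p μ
        ≤ ∑ _nk ∈ Finset.range N ×ˢ Finset.range P,
            ENNReal.ofReal (ε^2 * (Cm' * (M:ℝ)^((1:ℝ)/2))) :=
          Finset.sum_le_sum (fun nk _ => hterm nk.1 nk.2)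
      _ = (N*P : ℕ) * ENNReal.ofReal (ε^2 * (Cm' * (M:ℝ)^((1:ℝ)/2))) := by
          rw [Finset.sum_const, Finset.card_product, Finset.card_range,
            Finset.card_range, nsmul_eq_mul]
      _ = ENNReal.ofReal ((N:ℝ) * P * (ε^2 * (Cm' * (M:ℝ)^((1:ℝ)/2)))) := by
          rw [← ENNReal.ofReal_natCast (N*P), ← ENNReal.ofReal_mul (Nat.cast_nonneg _)]
          congr 1
          push_cast
          ring
  -- final real-number estimate
  have hE0 : (0:ℝ) ≤ ε^((1:ℝ)/3) := Real.rpow_nonneg hε0.le _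
  have hLg40 : (0:ℝ) ≤ (-Real.log ε)^((1:ℝ)/4) := Real.rpow_nonneg hLgpos.le _
  have hQhalf : Q^((1:ℝ)/2) = (32*σ2)^((1:ℝ)/4) * (-Real.log ε)^((1:ℝ)/4) := by
    have hX' : -32 * σ2 * Real.log ε = (32*σ2) * (-Real.log ε) := by ring
    rw [hQdef, ← Real.rpow_mul hXpos.le, hX', Real.mul_rpow hσ32.le hLgpos.le]
    norm_num
  have hQQ : Q^((1:ℝ)/2) * Q^((1:ℝ)/2) = Q := by
    rw [← Real.rpow_add hQpos]
    norm_num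
  have hεε : ε^((1:ℝ)/3) * ε^((1:ℝ)/3) = ε^((2:ℝ)/3) := by
    rw [← Real.rpow_add hε0]
    norm_num
  have hQδε : 2*Q/δ * ε^((2:ℝ)/3) = 2*Q^((1:ℝ)/2)*ε^((1:ℝ)/3) := by
    rw [hδdef, div_mul_eq_mul_div, div_eq_iff (by positivity : Q^((1:ℝ)/2) * ε^((1:ℝ)/3) ≠ 0)]
    calc 2*Q*ε^((2:ℝ)/3) = 2*Q*(ε^((1:ℝ)/3) * ε^((1:ℝ)/3)) := by rw [hεε]
      _ = 2*(Q^((1:ℝ)/2) * Q^((1:ℝ)/2))*(ε^((1:ℝ)/3) * ε^((1:ℝ)/3)) := by rw [hQQ]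
      _ = 2*Q^((1:ℝ)/2)*ε^((1:ℝ)/3)*(Q^((1:ℝ)/2)*ε^((1:ℝ)/3)) := by ring
  have he23 : ε ^ (-((2:ℝ)/3)) * ε ^ (-((2:ℝ)/3)) * ε^2 = ε^((2:ℝ)/3) := by
    rw [← hrpow_nat2, ← Real.rpow_add hε0, ← Real.rpow_add hε0]
    norm_num
  have hR2 : (N:ℝ) * P * (ε^2 * (Cm' * (M:ℝ)^((1:ℝ)/2)))
      ≤ Cm' * (2*Q^((1:ℝ)/2)*ε^((1:ℝ)/3)) + 2*Cm'*ε^((2:ℝ)/3) := by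
    have hP0 : (0:ℝ) ≤ (P:ℝ) := Nat.cast_nonneg P
    have s1 : (N:ℝ) * P ≤ ε ^ (-((2:ℝ)/3)) * (2*Q/δ + 2) :=
      mul_le_mul hNreal hPreal hP0 (Real.rpow_nonneg hε0.le _)
    have s2 : ε^2 * (Cm' * (M:ℝ)^((1:ℝ)/2)) ≤ ε^2 * (Cm' * ε ^ (-((2:ℝ)/3))) := by
      apply mul_le_mul_of_nonneg_left _ hε2pos.le
      exact mul_le_mul_of_nonneg_left hMhalf hCm'0
    calc (N:ℝ) * P * (ε^2 * (Cm' * (M:ℝ)^((1:ℝ)/2)))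
        ≤ (ε ^ (-((2:ℝ)/3)) * (2*Q/δ + 2)) * (ε^2 * (Cm' * ε ^ (-((2:ℝ)/3)))) := by
          apply mul_le_mul s1 s2 (by positivity) (by positivity)
      _ = Cm' * ((2*Q/δ) * (ε ^ (-((2:ℝ)/3)) * ε ^ (-((2:ℝ)/3)) * ε^2))
            + 2*Cm' * (ε ^ (-((2:ℝ)/3)) * ε ^ (-((2:ℝ)/3)) * ε^2) := by ring
      _ = Cm' * (2*Q/δ * ε^((2:ℝ)/3)) + 2*Cm'*ε^((2:ℝ)/3) := by rw [he23]
      _ = Cm' * (2*Q^((1:ℝ)/2)*ε^((1:ℝ)/3)) + 2*Cm'*ε^((2:ℝ)/3) := by rw [hQδε]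
  have hfinal : 2*L*δ + (N:ℝ) * P * (ε^2 * (Cm' * (M:ℝ)^((1:ℝ)/2)))
      ≤ (2*L*(32*σ2)^((1:ℝ)/4) + 2*Cm'*(32*σ2)^((1:ℝ)/4)
          + 2*Cm'/(Real.log 2)^((1:ℝ)/4) + 1) * ε^((1:ℝ)/3) * (-Real.log ε)^((1:ℝ)/4) := by
    have ht23 : ε^((2:ℝ)/3) ≤ ε^((1:ℝ)/3) :=
      Real.rpow_le_rpow_of_exponent_ge hε0 hεle1 (by norm_num)
    have hlg : (Real.log 2)^((1:ℝ)/4) ≤ (-Real.log ε)^((1:ℝ)/4) :=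
      Real.rpow_le_rpow hlog2pos.le hlog2le (by norm_num)
    have hratio : (1:ℝ) ≤ (-Real.log ε)^((1:ℝ)/4) / (Real.log 2)^((1:ℝ)/4) :=
      (one_le_div hlg24).mpr hlg
    have hE23 : ε^((2:ℝ)/3) ≤ ε^((1:ℝ)/3) * ((-Real.log ε)^((1:ℝ)/4) / (Real.log 2)^((1:ℝ)/4)) := by
      calc ε^((2:ℝ)/3) ≤ ε^((1:ℝ)/3) := ht23
        _ ≤ ε^((1:ℝ)/3) * ((-Real.log ε)^((1:ℝ)/4) / (Real.log 2)^((1:ℝ)/4)) :=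
          le_mul_of_one_le_right hE0 hratio
    have hδval : δ = (32*σ2)^((1:ℝ)/4) * (-Real.log ε)^((1:ℝ)/4) * ε^((1:ℝ)/3) := by
      rw [hδdef, hQhalf]
    have h1 : 2*L*δ = 2*L*(32*σ2)^((1:ℝ)/4) * (ε^((1:ℝ)/3) * (-Real.log ε)^((1:ℝ)/4)) := by
      rw [hδval]; ring
    have h2 : Cm' * (2*Q^((1:ℝ)/2)*ε^((1:ℝ)/3))
        = 2*Cm'*(32*σ2)^((1:ℝ)/4) * (ε^((1:ℝ)/3) * (-Real.log ε)^((1:ℝ)/4)) := by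
      rw [hQhalf]; ring
    have h3 : 2*Cm'*ε^((2:ℝ)/3)
        ≤ 2*Cm'/(Real.log 2)^((1:ℝ)/4) * (ε^((1:ℝ)/3) * (-Real.log ε)^((1:ℝ)/4)) := by
      have := mul_le_mul_of_nonneg_left hE23 (by linarith : (0:ℝ) ≤ 2*Cm')
      calc 2*Cm'*ε^((2:ℝ)/3)
          ≤ 2*Cm' * (ε^((1:ℝ)/3) * ((-Real.log ε)^((1:ℝ)/4) / (Real.log 2)^((1:ℝ)/4))) := this
        _ = 2*Cm'/(Real.log 2)^((1:ℝ)/4) * (ε^((1:ℝ)/3) * (-Real.log ε)^((1:ℝ)/4)) := by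
            field_simp
    have hEL : (0:ℝ) ≤ ε^((1:ℝ)/3) * (-Real.log ε)^((1:ℝ)/4) := mul_nonneg hE0 hLg40
    calc 2*L*δ + (N:ℝ) * P * (ε^2 * (Cm' * (M:ℝ)^((1:ℝ)/2)))
        ≤ 2*L*δ + (Cm' * (2*Q^((1:ℝ)/2)*ε^((1:ℝ)/3)) + 2*Cm'*ε^((2:ℝ)/3)) := by
          linarith [hR2]
      _ ≤ (2*L*(32*σ2)^((1:ℝ)/4) + 2*Cm'*(32*σ2)^((1:ℝ)/4)
            + 2*Cm'/(Real.log 2)^((1:ℝ)/4)) * (ε^((1:ℝ)/3) * (-Real.log ε)^((1:ℝ)/4)) := by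
          rw [h1, h2]
          linarith [h3]
      _ ≤ (2*L*(32*σ2)^((1:ℝ)/4) + 2*Cm'*(32*σ2)^((1:ℝ)/4)
            + 2*Cm'/(Real.log 2)^((1:ℝ)/4) + 1) * (ε^((1:ℝ)/3) * (-Real.log ε)^((1:ℝ)/4)) := by
          exact mul_le_mul_of_nonneg_right (by linarith) hEL
      _ = (2*L*(32*σ2)^((1:ℝ)/4) + 2*Cm'*(32*σ2)^((1:ℝ)/4)
            + 2*Cm'/(Real.log 2)^((1:ℝ)/4) + 1) * ε^((1:ℝ)/3) * (-Real.log ε)^((1:ℝ)/4) := by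
          ring
  -- assemble
  calc eLpNorm (Set.indicator
        {y : Λ | (⨆ t : Set.Icc (0:ℝ) 1, |Xhat ε y t|) ≤ Q}
        (fun y => ⨆ t : Set.Icc (0:ℝ) 1,
          |Deps μ a (fun _ => (1:ℝ)) v T ξ ε y (t:ℝ)|)) p μ
      ≤ eLpNorm (fun y => 2*L*δ + g y) p μ := hmono
    _ ≤ ENNReal.ofReal (2*L*δ) + eLpNorm g p μ := hsplit
    _ ≤ ENNReal.ofReal (2*L*δ)
        + ENNReal.ofReal ((N:ℝ) * P * (ε^2 * (Cm' * (M:ℝ)^((1:ℝ)/2)))) := by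
        exact add_le_add_right hgbound _
    _ = ENNReal.ofReal (2*L*δ + (N:ℝ) * P * (ε^2 * (Cm' * (M:ℝ)^((1:ℝ)/2)))) := by
        rw [← ENNReal.ofReal_add (by positivity) (by positivity)]
    _ ≤ ENNReal.ofReal ((2*L*(32*σ2)^((1:ℝ)/4) + 2*Cm'*(32*σ2)^((1:ℝ)/4)
          + 2*Cm'/(Real.log 2)^((1:ℝ)/4) + 1) * ε^((1:ℝ)/3) * (-Real.log ε)^((1:ℝ)/4)) :=
        ENNReal.ofReal_le_ofReal hfinal
end
end
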